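/- arXiv:1905.05302 — 3 statements merged into one kernel-verified Lean document; each statement's English description precedes it below -/
import Mathlib

section
/- Let (W,S) be a Coxeter system and suppose a subset K of W has a unique minimal element u in the Bruhat order. Then for any s ∈ S, the subset K ∪ sK also has a unique minimal element in the Bruhat order, namely u ∧ su. Analogously, if K admits a unique maximal element v in the Bruhat order, then v ∨ sv is the unique maximal element of K ∪ sK. -/
variable {B W : Type*} [Group W] {M : CoxeterMatrix B}

/-- The (strong) Bruhat order on the Coxeter group `W`: `u ≤ v` if and only if some
reduced word for `v` admits a sublist whose product is `u`. -/
def BruhatLE (cs : CoxeterSystem M W) (u v : W) : Prop :=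
  ∃ ω : List B, cs.IsReduced ω ∧ cs.wordProd ω = v ∧
    ∃ ω' : List B, ω'.Sublist ω ∧ cs.wordProd ω' = u

/-- The strict Bruhat order. -/
def BruhatLT (cs : CoxeterSystem M W) (u v : W) : Prop :=
  BruhatLE cs u v ∧ u ≠ v

/-- `m` is the unique minimal element of `K` in the Bruhat order, i.e. `m ∈ K` and
`m` is Bruhat-below every element of `K`. -/
def IsBrMin (cs : CoxeterSystem M W) (K : Set W) (m : W) : Prop :=
  m ∈ K ∧ ∀ x ∈ K, BruhatLE cs m x

/-- `m` is the unique maximal element of `K` in the Bruhat order, i.e. `m ∈ K` and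
`m` is Bruhat-above every element of `K`. -/
def IsBrMax (cs : CoxeterSystem M W) (K : Set W) (m : W) : Prop :=
  m ∈ K ∧ ∀ x ∈ K, BruhatLE cs x m

/-- A standard parabolic subgroup: a subgroup generated by a subset of the simple
reflections. -/
def IsStdParabolic (cs : CoxeterSystem M W) (P : Subgroup W) : Prop :=
  ∃ X : Set B, P = Subgroup.closure (cs.simple '' X)

/-- The left coset `u•W₁ = {u * b : b ∈ W₁}`. -/
def lCoset (W₁ : Subgroup W) (u : W) : Set W := {x | ∃ b ∈ W₁, x = u * b}

/-- The double coset `W₁ u W₂ = {a * u * b : a ∈ W₁, b ∈ W₂}`. -/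
def dblCoset (W₁ W₂ : Subgroup W) (u : W) : Set W :=
  {x | ∃ a ∈ W₁, ∃ b ∈ W₂, x = a * u * b}

open List
open scoped Classical

namespace BruhatAux

/-- Tits' reflection representation on `W × ℤˣ`. -/
noncomputable def titsF (cs : CoxeterSystem M W) (i : B) : Function.End (W × ℤˣ) :=
  fun p => (cs.simple i * p.1 * cs.simple i, if p.1 = cs.simple i then -p.2 else p.2)

variable (cs : CoxeterSystem M W)

local prefix:100 "s" => cs.simple
local prefix:100 "π" => cs.wordProd
local prefix:100 "ℓ" => cs.length
local prefix:100 "ris" => cs.rightInvSeq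
local prefix:100 "lis" => cs.leftInvSeq

theorem titsF_word (ω : List B) (p : W × ℤˣ) :
    ((ω.map (titsF cs)).prod : Function.End (W × ℤˣ)) p =
      (π ω * p.1 * (π ω)⁻¹, (-1) ^ ((ris ω).count p.1) * p.2) := by
  induction ω generalizing p with
  | nil =>
    show p = _
    simp [CoxeterSystem.wordProd_nil]
  | cons i ω ih =>
    have : ((List.map (titsF cs) (i :: ω)).prod : Function.End (W × ℤˣ)) p
        = titsF cs i (((ω.map (titsF cs)).prod : Function.End (W × ℤˣ)) p) := rfl
    rw [this, ih]
    simp only [titsF, CoxeterSystem.wordProd_cons, CoxeterSystem.rightInvSeq]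
    congr 1
    · simp [mul_assoc]
    · rw [List.count_cons]
      by_cases h : π ω * p.1 * (π ω)⁻¹ = s i
      · have h' : p.1 = (π ω)⁻¹ * s i * π ω := by
          rw [← h]; group
        rw [if_pos h, if_pos (by simp [h'])]
        rw [pow_succ, mul_assoc, neg_mul_eq_mul_neg, neg_one_mul]
      · have h' : p.1 ≠ (π ω)⁻¹ * s i * π ω := by
          intro hc; apply h; rw [hc]; group
        have h'' : ¬((cs.wordProd ω)⁻¹ * cs.simple i * cs.wordProd ω = p.1) := fun hc => h' hc.symm
        rw [if_neg h, if_neg (by simp only [beq_iff_eq]; exact h''), add_zero]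

end BruhatAux

namespace BruhatAux
variable (cs : CoxeterSystem M W)
local prefix:100 "s" => cs.simple
local prefix:100 "π" => cs.wordProd
local prefix:100 "ℓ" => cs.length
local prefix:100 "ris" => cs.rightInvSeq
local prefix:100 "lis" => cs.leftInvSeq

theorem simple_swap_pow (i j : B) (a : ℕ) :
    s j * (s i * s j) ^ a = (s j * s i) ^ a * s j := by
  induction a with
  | zero => simp
  | succ a ih =>
    rw [pow_succ', ← mul_assoc, pow_succ']
    rw [show s j * (s i * s j) = (s j * s i) * s j by group]
    rw [mul_assoc, ih, ← mul_assoc]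

theorem inv_sipow (i j : B) (a : ℕ) : ((s i * s j) ^ a)⁻¹ = (s j * s i) ^ a := by
  rw [← inv_pow, mul_inv_rev, cs.inv_simple, cs.inv_simple]

theorem conj_head_alt (i j : B) (n : ℕ) :
    (π (CoxeterSystem.alternatingWord i j n))⁻¹ * s (if Even n then j else i)
      * π (CoxeterSystem.alternatingWord i j n) = (s j * s i) ^ n * s j := by
  rw [cs.prod_alternatingWord_eq_mul_pow]
  rcases Nat.even_or_odd n with he | ho
  · obtain ⟨a, rfl⟩ := he
    have h2 : (a + a) / 2 = a := by omega
    rw [if_pos ⟨a, rfl⟩, if_pos ⟨a, rfl⟩, h2, one_mul, inv_sipow]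
    rw [mul_assoc, simple_swap_pow, ← mul_assoc, ← pow_add]
  · have hne : ¬ Even n := Nat.not_even_iff_odd.mpr ho
    obtain ⟨a, rfl⟩ := ho
    have h2 : (2 * a + 1) / 2 = a := by omega
    rw [if_neg hne, if_neg hne, h2, mul_inv_rev, inv_sipow, cs.inv_simple]
    have key : s j * s i * (s j * (s i * s j) ^ a) = (s j * s i) ^ (a + 1) * s j := by
      rw [simple_swap_pow, ← mul_assoc, ← pow_succ']
    calc (s j * s i) ^ a * s j * s i * (s j * (s i * s j) ^ a)
        = (s j * s i) ^ a * (s j * s i * (s j * (s i * s j) ^ a)) := by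
          simp only [mul_assoc]
      _ = (s j * s i) ^ a * ((s j * s i) ^ (a + 1) * s j) := by rw [key]
      _ = (s j * s i) ^ (2 * a + 1) * s j := by
          rw [← mul_assoc, ← pow_add]; ring_nf

theorem ris_alternatingWord (i j : B) (n : ℕ) :
    ris (CoxeterSystem.alternatingWord i j n) =
      ((List.range n).map (fun p => (s j * s i) ^ p * s j)).reverse := by
  induction n with
  | zero => simp [CoxeterSystem.alternatingWord]
  | succ n ih =>
    rw [CoxeterSystem.alternatingWord_succ']
    show ((π (CoxeterSystem.alternatingWord i j n))⁻¹ *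
        s (if Even n then j else i) * π (CoxeterSystem.alternatingWord i j n))
      :: ris (CoxeterSystem.alternatingWord i j n) = _
    rw [conj_head_alt, ih, List.range_succ]
    simp

theorem prod_titsF_alt (i j : B) (m : ℕ) :
    ((CoxeterSystem.alternatingWord i j (2 * m)).map (titsF cs)).prod
      = (titsF cs i * titsF cs j) ^ m := by
  induction m with
  | zero => simp [CoxeterSystem.alternatingWord]
  | succ m ih =>
    have h1 : 2 * (m + 1) = (2 * m + 1) + 1 := by ring
    rw [h1, CoxeterSystem.alternatingWord_succ', if_neg (by simp [Nat.even_add_one]),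
      CoxeterSystem.alternatingWord_succ', if_pos (by exact ⟨m, by ring⟩)]
    rw [List.map_cons, List.map_cons, List.prod_cons, List.prod_cons, ih, pow_succ']
    rw [mul_assoc]

theorem titsF_liftable : CoxeterMatrix.IsLiftable M (titsF cs) := by
  intro i j
  rw [← prod_titsF_alt]
  funext p
  rw [titsF_word]
  show _ = p
  have hprod : π (CoxeterSystem.alternatingWord i j (2 * M i j)) = 1 := by
    rw [cs.prod_alternatingWord_eq_mul_pow, if_pos ⟨M i j, by ring⟩, one_mul,
      show 2 * M i j / 2 = M i j by omega, cs.simple_mul_simple_pow]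
  have hcount : Even ((ris (CoxeterSystem.alternatingWord i j (2 * M i j))).count p.1) := by
    rw [ris_alternatingWord, List.count_reverse, show 2 * M i j = M i j + M i j by ring,
      List.range_add, List.map_append, List.count_append]
    have : ∀ p' : ℕ, (fun p' => (s j * s i) ^ p' * s j) (M i j + p') =
        (fun p' => (s j * s i) ^ p' * s j) p' := by
      intro p'
      simp only [pow_add, cs.simple_mul_simple_pow' i j, one_mul]
    rw [List.map_map, show ((fun p => (s j * s i) ^ p * s j) ∘ (M i j + ·))
      = (fun p' => (s j * s i) ^ p' * s j) from funext this]
    exact ⟨_, rfl⟩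
  rw [hprod, hcount.neg_one_pow]
  simp

end BruhatAux

namespace BruhatAux
variable (cs : CoxeterSystem M W)
local prefix:100 "s" => cs.simple
local prefix:100 "π" => cs.wordProd
local prefix:100 "ℓ" => cs.length
local prefix:100 "ris" => cs.rightInvSeq
local prefix:100 "lis" => cs.leftInvSeq

noncomputable def tits : W →* Function.End (W × ℤˣ) :=
  cs.lift ⟨titsF cs, titsF_liftable cs⟩

theorem tits_wordProd (ω : List B) : tits cs (π ω) = (ω.map (titsF cs)).prod := by
  induction ω with
  | nil => rw [CoxeterSystem.wordProd_nil, map_one]; rfl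
  | cons i ω ih =>
    rw [CoxeterSystem.wordProd_cons, map_mul, ih, List.map_cons, List.prod_cons]
    congr 1
    exact cs.lift_apply_simple (titsF_liftable cs) i

theorem count_parity {ω ρ : List B} (h : π ω = π ρ) (t : W) :
    ((-1 : ℤˣ)) ^ ((ris ω).count t) = (-1) ^ ((ris ρ).count t) := by
  have h1 := titsF_word cs ω (t, 1)
  have h2 := titsF_word cs ρ (t, 1)
  rw [← tits_wordProd] at h1 h2
  rw [h, h2] at h1
  have := congrArg Prod.snd h1
  simpa using this.symm

theorem ris_append (α β : List B) :
    ris (α ++ β) = (ris α).map (fun x => (π β)⁻¹ * x * π β) ++ ris β := by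
  induction α with
  | nil => simp
  | cons a α ih =>
    show ((π (α ++ β))⁻¹ * s a * π (α ++ β)) :: ris (α ++ β) = _
    rw [ih]
    show _ :: _ = ((π β)⁻¹ * ((π α)⁻¹ * s a * π α) * π β) :: _ ++ _
    rw [cs.wordProd_append, mul_inv_rev]
    simp [mul_assoc]

theorem lis_eq_map_conj (γ : List B) :
    lis γ = (ris γ).map (fun x => π γ * x * (π γ)⁻¹) := by
  induction γ with
  | nil => simp
  | cons a γ ih =>
    show s a :: List.map (MulAut.conj (s a)) (lis γ) = _
    show _ = (π (a :: γ) * ((π γ)⁻¹ * s a * π γ) * (π (a :: γ))⁻¹) :: List.map _ (ris γ)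
    rw [ih, List.map_map]
    congr 1
    · symm
      rw [cs.wordProd_cons, mul_inv_rev, cs.inv_simple]
      calc s a * π γ * ((π γ)⁻¹ * s a * π γ) * ((π γ)⁻¹ * s a)
          = s a * (π γ * (π γ)⁻¹) * s a * (π γ * (π γ)⁻¹) * s a := by
            simp only [mul_assoc]
        _ = s a := by simp [cs.simple_mul_simple_self]
    · apply List.map_congr_left
      intro x _
      rw [cs.wordProd_cons, mul_inv_rev, cs.inv_simple]
      simp [MulAut.conj_apply, mul_assoc]

theorem conj_injective (g : W) : Function.Injective (fun x : W => g * x * g⁻¹) := by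
  intro x y hxy
  simpa using hxy

theorem conj_injective' (g : W) : Function.Injective (fun x : W => g⁻¹ * x * g) := by
  intro x y hxy
  simpa using hxy

theorem mem_rightInvSeq_of_isRightInversion {ω : List B} {t : W}
    (ht : cs.IsRightInversion (π ω) t) : t ∈ ris ω := by
  obtain ⟨htr, hlt⟩ := ht
  set w := π ω with hw
  -- reduced word for w * t
  obtain ⟨τ, hτred, hτ⟩ := cs.exists_reduced_word' (w * t)
  -- expression of the reflection
  have htr2 := htr
  obtain ⟨q, k, hqk⟩ := htr2
  obtain ⟨γ, _, hγ⟩ := cs.exists_reduced_word q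
  have htt : t * t = 1 := CoxeterSystem.IsReflection.mul_self htr
  -- the word ρ
  set β : List B := γ ++ (k :: γ.reverse) with hβ
  have hπβ : π β = t := by
    rw [hβ, cs.wordProd_append, cs.wordProd_cons, cs.wordProd_reverse, ← hγ, hqk, mul_assoc]
  set ρ : List B := τ ++ β with hρ
  have hπρ : π ρ = w := by
    rw [hρ, cs.wordProd_append, hπβ, ← hτ, mul_assoc, htt, mul_one]
  -- count t in ris ρ is odd
  have hcτ : (ris τ).count t = 0 := by
    rw [List.count_eq_zero]
    intro hmem
    have := (cs.isRightInversion_of_mem_rightInvSeq hτred hmem).2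
    rw [← hτ, mul_assoc, htt, mul_one] at this
    omega
  have hmapτ : ((ris τ).map (fun x => (π β)⁻¹ * x * π β)).count t = 0 := by
    have : t = (fun x => (π β)⁻¹ * x * π β) t := by
      show t = (π β)⁻¹ * t * π β
      rw [hπβ, CoxeterSystem.IsReflection.inv htr, htt, one_mul]
    rw [this, List.count_map_of_injective _ _ (conj_injective' (π β)), hcτ]
  have hrisβ : ris β = ((ris γ).map (fun x => (π (k :: γ.reverse))⁻¹ * x * π (k :: γ.reverse)))
      ++ (t :: ris (γ.reverse)) := by
    rw [hβ, ris_append]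
    congr 1
    have hh : ris (k :: γ.reverse) = ((π γ.reverse)⁻¹ * s k * π γ.reverse) :: ris γ.reverse := rfl
    rw [hh, cs.wordProd_reverse, ← hγ, inv_inv, ← hqk]
  have hπδ : π (k :: γ.reverse) = s k * q⁻¹ := by
    rw [cs.wordProd_cons, cs.wordProd_reverse, hγ]
  have hc1 : ((ris γ).map (fun x => (π (k :: γ.reverse))⁻¹ * x * π (k :: γ.reverse))).count t
      = (ris γ).count (s k) := by
    have : t = (fun x => (π (k :: γ.reverse))⁻¹ * x * π (k :: γ.reverse)) (s k) := by
      rw [hπδ, hqk, mul_inv_rev, inv_inv, cs.inv_simple]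
      simp [mul_assoc, cs.simple_mul_simple_self]
    rw [this, List.count_map_of_injective _ _ (conj_injective' _)]
  have hc2 : (ris (γ.reverse)).count t = (ris γ).count (s k) := by
    rw [cs.rightInvSeq_reverse, List.count_reverse, lis_eq_map_conj]
    have : t = (fun x => π γ * x * (π γ)⁻¹) (s k) := by
      show t = π γ * s k * (π γ)⁻¹
      rw [← hγ, ← hqk]
    rw [this, List.count_map_of_injective _ _ (conj_injective _)]
  have hodd : (ris ρ).count t = 2 * ((ris γ).count (s k)) + 1 := by
    rw [hρ, ris_append, List.count_append, hmapτ, hrisβ, List.count_append,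
      hc1, List.count_cons_self, hc2]
    ring
  -- parity transfer
  have hπρω : π ρ = π ω := by rw [hπρ, hw]
  have hpar := count_parity cs hπρω t
  by_contra hmem
  have h0 : (ris ω).count t = 0 := List.count_eq_zero.mpr hmem
  rw [hodd, h0, pow_zero, pow_add, pow_mul] at hpar
  simp at hpar

end BruhatAux

namespace BruhatAux
variable (cs : CoxeterSystem M W)
local prefix:100 "s" => cs.simple
local prefix:100 "π" => cs.wordProd
local prefix:100 "ℓ" => cs.length
local prefix:100 "ris" => cs.rightInvSeq

/-- A single step in the Bruhat order: multiply by a reflection, length goes up. -/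
def BStep (x y : W) : Prop := ∃ t, cs.IsReflection t ∧ y = x * t ∧ ℓ x < ℓ y

/-- Bruhat order, defined via chains of reflections. -/
def BLE : W → W → Prop := Relation.ReflTransGen (BStep cs)

theorem simple_mul_cancel (i : B) (x : W) : s i * (s i * x) = x := by
  rw [← mul_assoc, cs.simple_mul_simple_self, one_mul]

theorem smul_length_lt_or_gt (i : B) (x : W) :
    ℓ (s i * x) < ℓ x ∨ ℓ x < ℓ (s i * x) := by
  have h1 := cs.length_simple_mul x i
  have h2 := cs.length_simple_mul_ne x i
  omega

theorem bstep_smul (i : B) (x : W) (h : ℓ x < ℓ (s i * x)) : BStep cs x (s i * x) :=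
  ⟨x⁻¹ * s i * x, ⟨x⁻¹, i, by group⟩, by group, h⟩

theorem ble_smul_of_lt (i : B) (x : W) (h : ℓ (s i * x) < ℓ x) : BLE cs (s i * x) x := by
  have hstep := bstep_smul cs i (s i * x) (by rwa [simple_mul_cancel])
  rw [simple_mul_cancel] at hstep
  exact Relation.ReflTransGen.single hstep

theorem exch {ω : List B} {t : W} (ht : cs.IsRightInversion (π ω) t) :
    ∃ k, k < ω.length ∧ π ω * t = π (ω.eraseIdx k) := by
  have hmem : t ∈ ris ω := mem_rightInvSeq_of_isRightInversion cs ht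
  obtain ⟨k, hk, hkt⟩ := List.getElem_of_mem hmem
  rw [cs.length_rightInvSeq] at hk
  refine ⟨k, hk, ?_⟩
  rw [← cs.wordProd_mul_getD_rightInvSeq ω k]
  congr 1
  rw [List.getD_eq_getElem _ _ (by rwa [cs.length_rightInvSeq]), hkt]

theorem exists_reduced_sublist_aux (n : ℕ) : ∀ (γ : List B), γ.length ≤ n →
    ∃ δ, δ.Sublist γ ∧ cs.IsReduced δ ∧ π δ = π γ := by
  induction n with
  | zero =>
    intro γ hγ
    have : γ = [] := List.eq_nil_of_length_eq_zero (by omega)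
    subst this
    exact ⟨[], List.Sublist.refl _, by simp [CoxeterSystem.IsReduced], rfl⟩
  | succ n ih =>
  intro γ hγlen
  by_cases hred : cs.IsReduced γ
  · exact ⟨γ, List.Sublist.refl γ, hred, rfl⟩
  have hP : ∃ m, ¬ cs.IsReduced (γ.take m) := ⟨γ.length, by simpa [List.take_length]⟩
  have hP0 : ¬ ¬ cs.IsReduced (γ.take 0) := by
    simp [CoxeterSystem.IsReduced]
  set k0 := Nat.find hP with hk0
  have hk0pos : 0 < k0 := by
    rcases Nat.eq_zero_or_pos k0 with h | h
    · exact absurd (h ▸ Nat.find_spec hP) hP0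
    · exact h
  set k := k0 - 1 with hk
  have htk : cs.IsReduced (γ.take k) := not_not.mp (Nat.find_min hP (by omega))
  have hntk : ¬ cs.IsReduced (γ.take (k + 1)) := by
    have : k + 1 = k0 := by omega
    rw [this]
    exact Nat.find_spec hP
  have hklen : k < γ.length := by
    by_contra hge
    apply hntk
    rwa [List.take_of_length_le (by omega), ← List.take_of_length_le (not_lt.mp hge)]
  have hsplit : γ.take (k + 1) = γ.take k ++ [γ[k]] := by
    rw [List.take_succ, List.getElem?_eq_getElem hklen]
    rfl
  have hπsplit : π (γ.take (k + 1)) = π (γ.take k) * s γ[k] := by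
    rw [hsplit, cs.wordProd_append, cs.wordProd_singleton]
  have hℓk : ℓ (π (γ.take k)) = k := by
    have := htk
    rwa [CoxeterSystem.IsReduced, List.length_take, min_eq_left (by omega)] at this
  have hlt : ℓ (π (γ.take k) * s γ[k]) < ℓ (π (γ.take k)) := by
    have h1 := cs.length_mul_simple (π (γ.take k)) γ[k]
    rcases h1 with h1 | h1
    · exfalso
      apply hntk
      rw [CoxeterSystem.IsReduced, hπsplit, h1, hℓk, List.length_take,
        min_eq_left (by omega)]
    · omega
  obtain ⟨j, hj, hje⟩ := exch cs ⟨cs.isReflection_simple γ[k], hlt⟩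
  set δ₀ : List B := (γ.take k).eraseIdx j ++ γ.drop (k + 1) with hδ₀
  have hπδ₀ : π δ₀ = π γ := by
    rw [hδ₀, cs.wordProd_append, ← hje, ← hπsplit, ← cs.wordProd_append,
      List.take_append_drop]
  have hsubδ₀ : δ₀.Sublist γ := by
    have h1 : ((γ.take k).eraseIdx j).Sublist (γ.take k) := List.eraseIdx_sublist _ j
    have h2 : (γ.take k).Sublist (γ.take (k + 1)) := by
      rw [hsplit]
      exact List.sublist_append_left _ _
    have h3 : δ₀.Sublist (γ.take (k + 1) ++ γ.drop (k + 1)) :=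
      List.Sublist.append_right (h1.trans h2) _
    rwa [List.take_append_drop] at h3
  have hjk : j < k := by
    have := hj
    rwa [List.length_take, min_eq_left hklen.le] at this
  have hlen1 : ((γ.take k).eraseIdx j).length = k - 1 := by
    rw [List.length_eraseIdx, if_pos hj, List.length_take, min_eq_left hklen.le]
  have hlenδ₀ : δ₀.length ≤ n := by
    rw [hδ₀, List.length_append, hlen1, List.length_drop]
    omega
  obtain ⟨δ, hs, hr, hp⟩ := ih δ₀ hlenδ₀
  exact ⟨δ, hs.trans hsubδ₀, hr, hp.trans hπδ₀⟩

theorem exists_reduced_sublist (γ : List B) :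
    ∃ δ, δ.Sublist γ ∧ cs.IsReduced δ ∧ π δ = π γ :=
  exists_reduced_sublist_aux cs γ.length γ le_rfl

theorem BLE.exists_sublist {u w : W} (h : BLE cs u w) :
    ∀ γ : List B, π γ = w → ∃ δ, δ.Sublist γ ∧ π δ = u := by
  induction h with
  | refl => exact fun γ hγ => ⟨γ, List.Sublist.refl γ, hγ⟩
  | tail _ hstep ih =>
    rename_i x w' _
    intro γ hγ
    obtain ⟨t, htr, hw, hlen⟩ := hstep
    obtain ⟨δ₁, hsub₁, hred₁, hπ₁⟩ := exists_reduced_sublist cs γ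
    have hπδ₁ : π δ₁ = w' := hπ₁.trans hγ
    have hinv : cs.IsRightInversion (π δ₁) t := by
      refine ⟨htr, ?_⟩
      rw [hπδ₁, hw, mul_assoc, CoxeterSystem.IsReflection.mul_self htr, mul_one]
      rw [hw] at hlen
      exact hlen
    obtain ⟨k, hk, hke⟩ := exch cs hinv
    have hx : π (δ₁.eraseIdx k) = x := by
      rw [← hke, hπδ₁, hw, mul_assoc, CoxeterSystem.IsReflection.mul_self htr, mul_one]
    obtain ⟨δ, hs, hp⟩ := ih (δ₁.eraseIdx k) hx
    exact ⟨δ, (hs.trans (List.eraseIdx_sublist _ k)).trans hsub₁, hp⟩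

end BruhatAux

namespace BruhatAux
variable (cs : CoxeterSystem M W)
local prefix:100 "s" => cs.simple
local prefix:100 "π" => cs.wordProd
local prefix:100 "ℓ" => cs.length
local prefix:100 "ris" => cs.rightInvSeq

theorem se2 (i : B) {x w : W} (hstep : BStep cs x w) (hsw : ℓ (s i * w) < ℓ w) :
    BLE cs (s i * x) w ∧ (ℓ x < ℓ (s i * x) → BLE cs x (s i * w)) := by
  obtain ⟨t, htr, hw, hlen⟩ := hstep
  obtain ⟨τ, hτred, hτ⟩ := cs.exists_reduced_word' (s i * w)
  set ω : List B := i :: τ with hω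
  have hπω : π ω = w := by
    rw [hω, cs.wordProd_cons, ← hτ, simple_mul_cancel]
  have hℓw : ℓ w = ℓ (s i * w) + 1 := by
    have h1 := cs.length_simple_mul w i
    omega
  have hωred : cs.IsReduced ω := by
    rw [CoxeterSystem.IsReduced, hπω, hω, List.length_cons, hℓw, hτ]
    rw [hτred]
  have hinv : cs.IsRightInversion (π ω) t := by
    refine ⟨htr, ?_⟩
    rw [hπω, hw, mul_assoc, CoxeterSystem.IsReflection.mul_self htr, mul_one]
    rw [hw] at hlen
    exact hlen
  obtain ⟨k, hk, hke⟩ := exch cs hinv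
  have hx : π (ω.eraseIdx k) = x := by
    rw [← hke, hπω, hw, mul_assoc, CoxeterSystem.IsReflection.mul_self htr, mul_one]
  rcases k with _ | k
  · -- erased the first letter : x = s i * w
    have hx0 : x = s i * w := by
      rw [← hx, hω, List.eraseIdx_cons_zero, hτ]
    constructor
    · rw [hx0, simple_mul_cancel]
      exact Relation.ReflTransGen.refl
    · intro _
      rw [hx0]
      exact Relation.ReflTransGen.refl
  · -- erased a letter of τ
    have hk' : k < τ.length := by
      rw [hω, List.length_cons] at hk
      omega
    have hx1 : x = s i * π (τ.eraseIdx k) := by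
      rw [← hx, hω, List.eraseIdx_cons_succ, cs.wordProd_cons]
    have hsix : s i * x = π (τ.eraseIdx k) := by
      rw [hx1, simple_mul_cancel]
    set t'' : W := (ris τ).getD k 1 with ht''
    have ht''mem : t'' ∈ ris τ := by
      rw [ht'', List.getD_eq_getElem _ _ (by rwa [cs.length_rightInvSeq])]
      exact List.getElem_mem _
    have hinv2 := cs.isRightInversion_of_mem_rightInvSeq hτred ht''mem
    have heq2 : π τ * t'' = π (τ.eraseIdx k) := cs.wordProd_mul_getD_rightInvSeq τ k
    have hlt2 : ℓ (s i * x) < ℓ (s i * w) := by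
      have h5 := hinv2.2
      rw [heq2, ← hsix, ← hτ] at h5
      exact h5
    have hstep1 : BStep cs (s i * x) (s i * w) := by
      refine ⟨t'', hinv2.1, ?_, hlt2⟩
      rw [hsix, ← heq2, ← hτ, mul_assoc, CoxeterSystem.IsReflection.mul_self hinv2.1, mul_one]
    have hstep2 : BStep cs (s i * w) w := by
      have h := bstep_smul cs i (s i * w) (by rwa [simple_mul_cancel])
      rwa [simple_mul_cancel] at h
    constructor
    · exact Relation.ReflTransGen.head hstep1 (Relation.ReflTransGen.single hstep2)
    · intro hxlt
      exact Relation.ReflTransGen.head (bstep_smul cs i x hxlt)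
        (Relation.ReflTransGen.single hstep1)

/-- The smaller of `x` and `s i * x`. -/
noncomputable def lo (i : B) (x : W) : W := if ℓ (s i * x) < ℓ x then s i * x else x

/-- The larger of `x` and `s i * x`. -/
noncomputable def hi (i : B) (x : W) : W := if ℓ x < ℓ (s i * x) then s i * x else x

theorem ble_lo_self (i : B) (x : W) : BLE cs (lo cs i x) x := by
  unfold lo
  split
  · exact ble_smul_of_lt cs i x (by assumption)
  · exact Relation.ReflTransGen.refl

theorem ble_lo_smul (i : B) (x : W) : BLE cs (lo cs i x) (s i * x) := by
  unfold lo
  split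
  · exact Relation.ReflTransGen.refl
  · rcases smul_length_lt_or_gt cs i x with h | h
    · omega
    · exact Relation.ReflTransGen.single (bstep_smul cs i x h)

theorem ble_self_hi (i : B) (x : W) : BLE cs x (hi cs i x) := by
  unfold hi
  split
  · exact Relation.ReflTransGen.single (bstep_smul cs i x (by assumption))
  · exact Relation.ReflTransGen.refl

theorem ble_smul_hi (i : B) (x : W) : BLE cs (s i * x) (hi cs i x) := by
  unfold hi
  split
  · exact Relation.ReflTransGen.refl
  · rcases smul_length_lt_or_gt cs i x with h | h
    · exact ble_smul_of_lt cs i x h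
    · omega

theorem chain_lo_step (i : B) {x w : W} (hstep : BStep cs x w) :
    BLE cs (lo cs i x) (lo cs i w) := by
    obtain ⟨t, htr, hw, hlen⟩ := hstep
    rcases smul_length_lt_or_gt cs i x with hx | hx
    · rcases smul_length_lt_or_gt cs i w with hws | hws
      · -- both go down
        unfold lo
        rw [if_pos hx, if_pos hws]
        refine Relation.ReflTransGen.single ⟨t, htr, ?_, ?_⟩
        · rw [hw, mul_assoc]
        · have h1 := cs.length_simple_mul x i
          have h2 := cs.length_simple_mul w i
          omega
      · unfold lo
        rw [if_pos hx, if_neg (by omega)]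
        exact (ble_smul_of_lt cs i x hx).trans
          (Relation.ReflTransGen.single ⟨t, htr, hw, hlen⟩)
    · rcases smul_length_lt_or_gt cs i w with hws | hws
      · unfold lo
        rw [if_neg (by omega), if_pos hws]
        exact (se2 cs i ⟨t, htr, hw, hlen⟩ hws).2 hx
      · unfold lo
        rw [if_neg (by omega), if_neg (by omega)]
        exact Relation.ReflTransGen.single ⟨t, htr, hw, hlen⟩

theorem chain_hi_step (i : B) {x w : W} (hstep : BStep cs x w) :
    BLE cs (hi cs i x) (hi cs i w) := by
    obtain ⟨t, htr, hw, hlen⟩ := hstep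
    rcases smul_length_lt_or_gt cs i x with hx | hx
    · rcases smul_length_lt_or_gt cs i w with hws | hws
      · unfold hi
        rw [if_neg (by omega), if_neg (by omega)]
        exact Relation.ReflTransGen.single ⟨t, htr, hw, hlen⟩
      · unfold hi
        rw [if_neg (by omega), if_pos hws]
        exact (Relation.ReflTransGen.single ⟨t, htr, hw, hlen⟩).trans
          (Relation.ReflTransGen.single (bstep_smul cs i w hws))
    · rcases smul_length_lt_or_gt cs i w with hws | hws
      · unfold hi
        rw [if_pos hx, if_neg (by omega)]
        exact (se2 cs i ⟨t, htr, hw, hlen⟩ hws).1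
      · unfold hi
        rw [if_pos hx, if_pos hws]
        refine Relation.ReflTransGen.single ⟨t, htr, ?_, ?_⟩
        · rw [hw, mul_assoc]
        · have h1 := cs.length_simple_mul x i
          have h2 := cs.length_simple_mul w i
          omega

theorem chain_lo (i : B) {v w : W} (h : BLE cs v w) : BLE cs (lo cs i v) (lo cs i w) := by
  induction h with
  | refl => exact Relation.ReflTransGen.refl
  | tail h1 hstep ih => exact ih.trans (chain_lo_step cs i hstep)

theorem chain_hi (i : B) {v w : W} (h : BLE cs v w) : BLE cs (hi cs i v) (hi cs i w) := by
  induction h with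
  | refl => exact Relation.ReflTransGen.refl
  | tail h1 hstep ih => exact ih.trans (chain_hi_step cs i hstep)

theorem ble_of_sublist : ∀ {ω ω' : List B}, cs.IsReduced ω → ω'.Sublist ω →
    BLE cs (π ω') (π ω) := by
  intro ω
  induction ω with
  | nil =>
    intro ω' _ hsub
    rw [List.sublist_nil.mp hsub]
    exact Relation.ReflTransGen.refl
  | cons a α ih =>
    intro ω' hred hsub
    have hαred : cs.IsReduced α := by
      have := CoxeterSystem.IsReduced.drop hred 1
      simpa using this
    have hup : ℓ (π α) < ℓ (s a * π α) := by
      have h1 : ℓ (π (a :: α)) = α.length + 1 := by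
        rw [hred]
        simp
      rw [cs.wordProd_cons] at h1
      have h2 : ℓ (π α) = α.length := hαred
      omega
    cases hsub with
    | cons _ h =>
      refine (ih hαred h).trans ?_
      rw [cs.wordProd_cons]
      exact Relation.ReflTransGen.single (bstep_smul cs a (π α) hup)
    | cons_cons _ h =>
      rename_i ρ
      rw [cs.wordProd_cons, cs.wordProd_cons]
      have hB := ih hαred h
      have h1 : BLE cs (s a * π ρ) (hi cs a (π ρ)) := ble_smul_hi cs a (π ρ)
      have h2 : BLE cs (hi cs a (π ρ)) (hi cs a (π α)) := chain_hi cs a hB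
      have h3 : hi cs a (π α) = s a * π α := by
        unfold hi
        rw [if_pos hup]
      exact (h1.trans h2).trans (h3 ▸ Relation.ReflTransGen.refl)

end BruhatAux

namespace BruhatAux
variable (cs : CoxeterSystem M W)

theorem ble_of_bruhatLE {u v : W} (h : BruhatLE cs u v) : BLE cs u v := by
  obtain ⟨ω, hred, hv, ω', hsub, hu⟩ := h
  rw [← hv, ← hu]
  exact ble_of_sublist cs hred hsub

theorem bruhatLE_of_ble {u v : W} (h : BLE cs u v) : BruhatLE cs u v := by
  obtain ⟨ω, hred, hv⟩ := cs.exists_reduced_word' v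
  obtain ⟨δ, hsub, hπ⟩ := BLE.exists_sublist cs h ω hv.symm
  exact ⟨ω, hred, hv.symm, δ, hsub, hπ⟩

end BruhatAux

open BruhatAux

/-- If a subset `K` of a Coxeter group has a unique minimal element `u` under the Bruhat
order, then for any simple reflection `s`, the set `K ∪ sK` has a unique minimal element,
namely `u ∧ su` (the Bruhat-smaller of `u` and `su`).  Analogously, if `K` has a unique
maximal element `v`, then `v ∨ sv` is the unique maximal element of `K ∪ sK`. -/
theorem stmt_0 (cs : CoxeterSystem M W) (K : Set W) (i : B) :
    (∀ u : W, IsBrMin cs K u →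
      ∃ m, (m = u ∨ m = cs.simple i * u) ∧
        IsBrMin cs (K ∪ (fun x => cs.simple i * x) '' K) m) ∧
    (∀ v : W, IsBrMax cs K v →
      ∃ m, (m = v ∨ m = cs.simple i * v) ∧
        IsBrMax cs (K ∪ (fun x => cs.simple i * x) '' K) m) := by
  constructor
  · rintro u ⟨huK, hmin⟩
    refine ⟨lo cs i u, ?_, ?_, ?_⟩
    · unfold lo
      split
      · exact Or.inr rfl
      · exact Or.inl rfl
    · -- membership
      unfold lo
      split
      · exact Or.inr ⟨u, huK, rfl⟩
      · exact Or.inl huK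
    · rintro y (hyK | ⟨x, hxK, rfl⟩)
      · have hB : BLE cs u y := ble_of_bruhatLE cs (hmin y hyK)
        exact bruhatLE_of_ble cs ((chain_lo cs i hB).trans (ble_lo_self cs i y))
      · have hB : BLE cs u x := ble_of_bruhatLE cs (hmin x hxK)
        exact bruhatLE_of_ble cs ((chain_lo cs i hB).trans (ble_lo_smul cs i x))
  · rintro v ⟨hvK, hmax⟩
    refine ⟨hi cs i v, ?_, ?_, ?_⟩
    · unfold hi
      split
      · exact Or.inr rfl
      · exact Or.inl rfl
    · unfold hi
      split
      · exact Or.inr ⟨v, hvK, rfl⟩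
      · exact Or.inl hvK
    · rintro y (hyK | ⟨x, hxK, rfl⟩)
      · have hB : BLE cs y v := ble_of_bruhatLE cs (hmax y hyK)
        exact bruhatLE_of_ble cs ((ble_self_hi cs i y).trans (chain_hi cs i hB))
      · have hB : BLE cs x v := ble_of_bruhatLE cs (hmax x hxK)
        exact bruhatLE_of_ble cs ((ble_smul_hi cs i x).trans (chain_hi cs i hB))
end

section
/- Let (W,S) be a Coxeter system and let K be a subset of W that admits a unique minimal element u in the Bruhat order. Then, for any two elements σ₁ and σ₂ of W, the set I(σ₁) K I(σ₂) = { a k b : a ≤ σ₁, k ∈ K, b ≤ σ₂ } has a unique minimal element in the Bruhat order, and this element is the unique minimal element of I(σ₁) u I(σ₂) = { a u b : a ≤ σ₁, b ≤ σ₂ } (which exists). -/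
variable {B W : Type*} [Group W] {M : CoxeterMatrix B}

namespace BrAux

open CoxeterSystem List
open scoped Classical

variable (cs : CoxeterSystem M W)

local prefix:100 "σ" => cs.simple
local prefix:100 "π" => cs.wordProd
local prefix:100 "ℓ" => cs.length

theorem two_eq_zero : (1 : ZMod 2) + 1 = 0 := rfl

/-- Tits' parity function on `W × ZMod 2`. -/
noncomputable def etaFun (i : B) : W × ZMod 2 → W × ZMod 2 :=
  open scoped Classical in
  fun p => (σ i * p.1 * σ i, p.2 + if p.1 = σ i then 1 else 0)

theorem etaFun_involutive (i : B) : Function.Involutive (etaFun cs i) := by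
  classical
  intro p
  simp only [etaFun]
  have h1 : σ i * (σ i * p.1 * σ i) * σ i = p.1 := by
    simp [← mul_assoc, cs.simple_mul_simple_cancel_right, cs.simple_mul_simple_self]
  have h2 : (σ i * p.1 * σ i = σ i) ↔ (p.1 = σ i) := by
    constructor
    · intro h
      have := congrArg (fun x => σ i * x * σ i) h
      rw [h1] at this
      rw [this]
      simp [← mul_assoc, cs.simple_mul_simple_self]
    · rintro h; rw [h]
      simp [cs.simple_mul_simple_self]
  rw [Prod.ext_iff]
  refine ⟨h1, ?_⟩
  simp only [h2]
  by_cases h : p.1 = σ i <;> simp [h, add_assoc, two_eq_zero]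

/-- Tits' parity permutation. -/
noncomputable def eta (i : B) : Equiv.Perm (W × ZMod 2) :=
  (etaFun_involutive cs i).toPerm

section braid

variable (i j : B)

theorem simple_conj_pow_simple (k : ℕ) :
    σ i * (σ i * σ j) ^ k * σ i = ((σ i * σ j) ^ k)⁻¹ := by
  have h : σ i * (σ i * σ j) * (σ i)⁻¹ = (σ i * σ j)⁻¹ := by
    rw [cs.inv_simple, mul_inv_rev, cs.inv_simple, cs.inv_simple]
    simp [← mul_assoc, cs.simple_mul_simple_self]
  calc σ i * (σ i * σ j) ^ k * σ i = σ i * (σ i * σ j) ^ k * (σ i)⁻¹ := by rw [cs.inv_simple]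
    _ = (σ i * (σ i * σ j) * (σ i)⁻¹) ^ k := by rw [conj_pow]
    _ = ((σ i * σ j) ^ k)⁻¹ := by rw [h, inv_pow]

theorem inv_pow_conj_simple (k : ℕ) :
    ((σ i * σ j) ^ k)⁻¹ * σ i * (σ i * σ j) ^ k = σ i * (σ i * σ j) ^ (2 * k) := by
  have h2 : ((σ i * σ j) ^ k)⁻¹ = σ i * (σ i * σ j) ^ k * σ i :=
    (simple_conj_pow_simple cs i j k).symm
  rw [h2, two_mul, pow_add]
  simp [mul_assoc, cs.simple_mul_simple_cancel_left]

theorem inv_pow_conj_simple' (k : ℕ) :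
    ((σ i * σ j) ^ k)⁻¹ * σ j * (σ i * σ j) ^ k = σ i * (σ i * σ j) ^ (2 * k + 1) := by
  have hj : σ j = σ i * (σ i * σ j) := by
    simp [← mul_assoc, cs.simple_mul_simple_self]
  calc ((σ i * σ j) ^ k)⁻¹ * σ j * (σ i * σ j) ^ k
      = ((σ i * σ j) ^ k)⁻¹ * (σ i * (σ i * σ j)) * (σ i * σ j) ^ k := by rw [← hj]
    _ = ((σ i * σ j) ^ k)⁻¹ * σ i * ((σ i * σ j) * (σ i * σ j) ^ k) := by
        simp only [mul_assoc]
    _ = ((σ i * σ j) ^ k)⁻¹ * σ i * ((σ i * σ j) ^ k * (σ i * σ j)) := by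
        rw [← pow_succ', pow_succ]
    _ = ((σ i * σ j) ^ k)⁻¹ * σ i * (σ i * σ j) ^ k * (σ i * σ j) := by
        simp only [mul_assoc]
    _ = σ i * (σ i * σ j) ^ (2 * k) * (σ i * σ j) := by
        rw [inv_pow_conj_simple cs i j k]
    _ = σ i * (σ i * σ j) ^ (2 * k + 1) := by rw [mul_assoc, ← pow_succ]

end braid

section braidrel

variable (i j : B)

theorem eta_apply (t : W) (ε : ZMod 2) :
    eta cs i (t, ε) = (σ i * t * σ i, ε + if t = σ i then 1 else 0) := rfl

private theorem conj_eq_iff (a t y : W) : a * t * a⁻¹ = y ↔ t = a⁻¹ * y * a := by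
  constructor
  · rintro rfl; group
  · rintro rfl; group

theorem eta_mul_pow_apply (k : ℕ) (t : W) (ε : ZMod 2) :
    ((eta cs i * eta cs j) ^ k) (t, ε) =
      ((σ i * σ j) ^ k * t * ((σ i * σ j) ^ k)⁻¹,
        ε + ∑ n ∈ Finset.range (2 * k),
          if t = σ i * (σ i * σ j) ^ (n + 1) then (1 : ZMod 2) else 0) := by
  classical
  induction k with
  | zero => simp
  | succ k ih =>
    rw [pow_succ', Equiv.Perm.mul_apply, ih, Equiv.Perm.mul_apply, eta_apply, eta_apply]
    have e1 : σ i * (σ j * ((σ i * σ j) ^ k * t * ((σ i * σ j) ^ k)⁻¹) * σ j) * σ i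
        = (σ i * σ j) ^ (k + 1) * t * ((σ i * σ j) ^ (k + 1))⁻¹ := by
      rw [pow_succ']
      simp only [mul_inv_rev, inv_simple, mul_assoc]
    have e2 : ((σ i * σ j) ^ k * t * ((σ i * σ j) ^ k)⁻¹ = σ j)
        ↔ (t = σ i * (σ i * σ j) ^ (2 * k + 1)) := by
      rw [conj_eq_iff, inv_pow_conj_simple' cs i j k]
    have e3 : (σ j * ((σ i * σ j) ^ k * t * ((σ i * σ j) ^ k)⁻¹) * σ j = σ i)
        ↔ (t = σ i * (σ i * σ j) ^ (2 * k + 2)) := by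
      have hσj : (σ j)⁻¹ = σ j := cs.inv_simple j
      have : σ j * ((σ i * σ j) ^ k * t * ((σ i * σ j) ^ k)⁻¹) * σ j
          = (σ j * (σ i * σ j) ^ k) * t * (σ j * (σ i * σ j) ^ k)⁻¹ := by
        rw [mul_inv_rev, hσj]
        simp only [mul_assoc]
      rw [this, conj_eq_iff]
      have h4 : (σ j * (σ i * σ j) ^ k)⁻¹ * σ i * (σ j * (σ i * σ j) ^ k)
          = ((σ i * σ j) ^ (k+1))⁻¹ * σ i * (σ i * σ j) ^ (k+1) := by
        have h5 : σ j * (σ i * σ j) ^ k = (σ i)⁻¹ * (σ i * σ j) ^ (k+1) := by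
          rw [cs.inv_simple, pow_succ']
          simp only [← mul_assoc, cs.simple_mul_simple_self, one_mul]
        rw [h5]
        simp only [mul_inv_rev, inv_inv, mul_assoc, cs.inv_simple]
        simp only [← mul_assoc, cs.simple_mul_simple_cancel_right]
      rw [h4, inv_pow_conj_simple cs i j (k+1)]
      have : 2 * (k + 1) = 2 * k + 2 := by ring
      rw [this]
    rw [Prod.ext_iff]
    constructor
    · exact e1
    · simp only [e2, e3]
      have hrange : 2 * (k + 1) = (2 * k) + 1 + 1 := by ring
      rw [hrange, Finset.sum_range_succ, Finset.sum_range_succ]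
      have h2k1 : 2 * k + 1 + 1 = 2 * k + 2 := by ring
      rw [h2k1]
      ring

theorem eta_liftable : M.IsLiftable (fun i => eta cs i) := by
  classical
  intro i j
  ext ⟨t, ε⟩
  · rw [eta_mul_pow_apply, cs.simple_mul_simple_pow i j]
    simp
  · rw [eta_mul_pow_apply]
    simp only [Equiv.Perm.one_apply]
    have : ∑ n ∈ Finset.range (2 * M i j),
        (if t = σ i * (σ i * σ j) ^ (n + 1) then (1 : ZMod 2) else 0) = 0 := by
      rw [two_mul, Finset.sum_range_add]
      have heq : ∀ n : ℕ, (if t = σ i * (σ i * σ j) ^ (M i j + n + 1) then (1 : ZMod 2) else 0)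
          = if t = σ i * (σ i * σ j) ^ (n + 1) then (1 : ZMod 2) else 0 := by
        intro n
        have : (σ i * σ j) ^ (M i j + n + 1) = (σ i * σ j) ^ (n + 1) := by
          have harr : M i j + n + 1 = (n + 1) + M i j := by ring
          rw [harr, pow_add, cs.simple_mul_simple_pow i j, mul_one]
        rw [this]
      simp only [heq]
      generalize (∑ n ∈ Finset.range (M i j),
        (if t = σ i * (σ i * σ j) ^ (n + 1) then (1 : ZMod 2) else 0)) = X
      have : X + X = 2 * X := by ring
      rw [this]
      have h2 : (2 : ZMod 2) = 0 := rfl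
      rw [h2, zero_mul]
    rw [this, add_zero]

end braidrel

section theta

/-- The Tits representation used to detect inversions. -/
noncomputable def theta : W →* Equiv.Perm (W × ZMod 2) :=
  cs.lift ⟨fun i => eta cs i, eta_liftable cs⟩

theorem theta_simple (i : B) : theta cs (σ i) = eta cs i :=
  cs.lift_apply_simple (eta_liftable cs) i

theorem theta_fst (w t : W) (ε : ZMod 2) : (theta cs w (t, ε)).1 = w * t * w⁻¹ := by
  induction w using cs.simple_induction generalizing t ε with
  | simple i => rw [theta_simple, eta_apply]; simp
  | one => simp
  | mul w₁ w₂ h₁ h₂ =>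
    rw [map_mul, Equiv.Perm.mul_apply]
    have e : theta cs w₂ (t, ε) = ((theta cs w₂ (t, ε)).1, (theta cs w₂ (t, ε)).2) := rfl
    rw [e, h₁ _ _, h₂ _ _]
    group

theorem theta_snd (w : W) (t : W) (ε : ZMod 2) :
    (theta cs w (t, ε)).2 = ε + (theta cs w (t, 0)).2 := by
  induction w using cs.simple_induction generalizing t ε with
  | simple i => rw [theta_simple, eta_apply, eta_apply]; simp [add_assoc]
  | one => simp
  | mul w₁ w₂ h₁ h₂ =>
    rw [map_mul, Equiv.Perm.mul_apply, Equiv.Perm.mul_apply]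
    have e2 : theta cs w₂ (t, ε) = ((theta cs w₂ (t, 0)).1, ε + (theta cs w₂ (t, 0)).2) := by
      rw [Prod.ext_iff]
      exact ⟨by rw [theta_fst, theta_fst], by rw [h₂]⟩
    have e0 : theta cs w₂ (t, 0) = ((theta cs w₂ (t, 0)).1, (theta cs w₂ (t, 0)).2) := rfl
    rw [e2]
    conv_rhs => rw [e0]
    rw [h₁ _ (ε + (theta cs w₂ (t, 0)).2), h₁ _ ((theta cs w₂ (t, 0)).2)]
    rw [add_assoc]

/-- The parity of the number of times `t` occurs in the right inversion sequence of any
word for `w`. -/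
noncomputable def Nf (w t : W) : ZMod 2 := (theta cs w (t, 0)).2

theorem theta_apply' (w t : W) (ε : ZMod 2) :
    theta cs w (t, ε) = (w * t * w⁻¹, ε + Nf cs w t) := by
  rw [Prod.ext_iff]
  exact ⟨theta_fst cs w t ε, theta_snd cs w t ε⟩

theorem Nf_one (t : W) : Nf cs 1 t = 0 := by simp [Nf]

theorem Nf_mul (a b t : W) : Nf cs (a * b) t = Nf cs b t + Nf cs a (b * t * b⁻¹) := by
  have : theta cs (a * b) (t, 0) = theta cs a (theta cs b (t, 0)) := by
    rw [map_mul, Equiv.Perm.mul_apply]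
  rw [Nf, this, theta_apply' cs b t 0, theta_apply' cs a (b * t * b⁻¹) (0 + Nf cs b t)]
  simp [add_comm]

theorem Nf_simple (i : B) (t : W) : Nf cs (σ i) t = if t = σ i then 1 else 0 := by
  rw [Nf, theta_simple, eta_apply, zero_add]

theorem Nf_inv (w t : W) : Nf cs w⁻¹ t = Nf cs w (w⁻¹ * t * w) := by
  have h := Nf_mul cs w w⁻¹ t
  rw [mul_inv_cancel, Nf_one, inv_inv] at h
  have : ∀ x y : ZMod 2, 0 = x + y → x = y := by decide
  exact this _ _ h

theorem Nf_mem_rightInvSeq (ω : List B) (t : W) (h : Nf cs (π ω) t = 1) :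
    t ∈ cs.rightInvSeq ω := by
  induction ω with
  | nil => rw [wordProd_nil, Nf_one] at h; exact absurd h (by decide)
  | cons i ω ih =>
    rw [wordProd_cons, Nf_mul, Nf_simple] at h
    rw [rightInvSeq]
    by_cases hc : π ω * t * (π ω)⁻¹ = σ i
    · refine List.mem_cons.2 (Or.inl ?_)
      rw [← hc]; group
    · rw [if_neg hc, add_zero] at h
      right
      exact ih h

theorem Nf_refl_self {t : W} (ht : cs.IsReflection t) : Nf cs t t = 1 := by
  obtain ⟨w, i, rfl⟩ := ht
  have h1 : Nf cs (w * (σ i * w⁻¹)) (w * σ i * w⁻¹)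
      = Nf cs (σ i * w⁻¹) (w * σ i * w⁻¹) + Nf cs w (σ i) := by
    rw [Nf_mul]
    congr 2
    group
  have h2 : Nf cs (σ i * w⁻¹) (w * σ i * w⁻¹) = Nf cs w⁻¹ (w * σ i * w⁻¹) + 1 := by
    rw [Nf_mul, Nf_simple, if_pos (by group : w⁻¹ * (w * σ i * w⁻¹) * w⁻¹⁻¹ = σ i)]
  have h3 : Nf cs w⁻¹ (w * σ i * w⁻¹) = Nf cs w (σ i) := by
    rw [Nf_inv]
    congr 1
    group
  have : Nf cs (w * σ i * w⁻¹) (w * σ i * w⁻¹)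
      = Nf cs (σ i * w⁻¹) (w * σ i * w⁻¹) + Nf cs w (σ i) := by
    rw [← h1, mul_assoc]
  rw [this, h2, h3]
  have : ∀ x : ZMod 2, x + 1 + x = 1 := by decide
  exact this _

theorem Nf_eq_one_iff {t : W} (ht : cs.IsReflection t) (w : W) :
    Nf cs w t = 1 ↔ ℓ (w * t) < ℓ w := by
  have fwd : ∀ v : W, Nf cs v t = 1 → ℓ (v * t) < ℓ v := by
    intro v hv
    obtain ⟨ω, hred, hw⟩ := cs.exists_reduced_word' v
    rw [hw] at hv ⊢
    exact (cs.isRightInversion_of_mem_rightInvSeq hred (Nf_mem_rightInvSeq cs ω t hv)).2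
  constructor
  · exact fwd w
  · intro hlt
    by_contra hne
    have h0 : Nf cs w t = 0 := by
      have : ∀ x : ZMod 2, x ≠ 1 → x = 0 := by decide
      exact this _ hne
    have hwt : Nf cs (w * t) t = 1 := by
      have h := Nf_mul cs (w * t) t t
      have ht3 : t * t * t⁻¹ = t := by rw [ht.mul_self, one_mul, ht.inv]
      have hwtt : w * t * t = w := by rw [mul_assoc, ht.mul_self, mul_one]
      rw [ht3, hwtt, Nf_refl_self cs ht, h0] at h
      -- h : 0 = 1 + Nf cs (w*t) t
      have : ∀ x : ZMod 2, (0 : ZMod 2) = 1 + x → x = 1 := by decide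
      exact this _ h
    have := fwd (w * t) hwt
    rw [mul_assoc, ht.mul_self, mul_one] at this
    omega

/-- Strong exchange, word form: needs no reducedness hypothesis. -/
theorem strong_exchange (ω : List B) {t : W} (ht : cs.IsReflection t)
    (h : ℓ (π ω * t) < ℓ (π ω)) :
    ∃ ω', ω'.Sublist ω ∧ π ω' = π ω * t := by
  have h1 : Nf cs (π ω) t = 1 := (Nf_eq_one_iff cs ht (π ω)).2 h
  have h2 := Nf_mem_rightInvSeq cs ω t h1
  obtain ⟨n, hn, hget⟩ := List.mem_iff_get.1 h2
  refine ⟨ω.eraseIdx n, List.eraseIdx_sublist ω n, ?_⟩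
  have hn' : n < ω.length := by
    have := cs.length_rightInvSeq ω
    omega
  have hd := cs.wordProd_mul_getD_rightInvSeq ω n
  rw [← hd]
  congr 1
  exact (List.getD_eq_get _ _ n)

end theta

section chain

/-- A single step in a Bruhat chain: multiply by a reflection on the right, increasing length. -/
def BStep (x y : W) : Prop := ∃ t, cs.IsReflection t ∧ y = x * t ∧ ℓ x < ℓ y

/-- The Bruhat order, chain form. -/
def BLe : W → W → Prop := Relation.ReflTransGen (BStep cs)

theorem BLe.refl (x : W) : BLe cs x x := Relation.ReflTransGen.refl

theorem BLe.trans {x y z : W} (h : BLe cs x y) (h' : BLe cs y z) : BLe cs x z :=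
  Relation.ReflTransGen.trans h h'

theorem BLe.single {x y : W} (h : BStep cs x y) : BLe cs x y :=
  Relation.ReflTransGen.single h

theorem bstep_simple {x : W} (i : B) (h : ℓ x < ℓ (x * σ i)) : BStep cs x (x * σ i) :=
  ⟨σ i, cs.isReflection_simple i, rfl, h⟩

theorem bstep_simple_left {x : W} (i : B) (h : ℓ x < ℓ (σ i * x)) : BStep cs x (σ i * x) :=
  ⟨x⁻¹ * σ i * x, by
    have := (cs.isReflection_simple i).conj x⁻¹
    rwa [inv_inv] at this, by group, h⟩

theorem ble_inv {x y : W} (h : BLe cs x y) : BLe cs x⁻¹ y⁻¹ := by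
  induction h with
  | refl => exact BLe.refl cs _
  | tail _ hstep ih =>
    rename_i b c _
    obtain ⟨t, ht, hc, hlen⟩ := hstep
    have hstep' : BStep cs b⁻¹ c⁻¹ := by
      refine ⟨b * t * b⁻¹, ht.conj b, ?_, ?_⟩
      · rw [hc, mul_inv_rev, ht.inv]
        simp [mul_assoc]
      · rw [cs.length_inv, cs.length_inv]; exact hlen
    exact ih.trans cs (BLe.single cs hstep')

/-- Key combinatorial lemma for lifting. -/
theorem lemC {x z : W} {t : W} (i : B) (ht : cs.IsReflection t) (hz : z = x * t)
    (hlt : ℓ x < ℓ z) (hdesc : ℓ (z * σ i) < ℓ z) :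
    z = x * σ i ∨ ∃ t', cs.IsReflection t' ∧ z * σ i = (x * σ i) * t'
      ∧ ℓ (x * σ i) < ℓ (z * σ i) := by
  obtain ⟨β, hβred, hβ⟩ := cs.exists_reduced_word' (z * σ i)
  have hzlen : ℓ (z * σ i) + 1 = ℓ z := by
    rcases cs.length_mul_simple z i with h | h
    · omega
    · omega
  have hβconc : π (β.concat i) = z := by
    rw [wordProd_concat, ← hβ, mul_assoc, cs.simple_mul_simple_self, mul_one]
  have hβconcred : cs.IsReduced (β.concat i) := by
    unfold CoxeterSystem.IsReduced at hβred ⊢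
    rw [hβconc, List.length_concat, ← hβred, ← hβ]
    omega
  have hzt : z * t = x := by rw [hz, mul_assoc, ht.mul_self, mul_one]
  have htinv : ℓ (z * t) < ℓ z := by rw [hzt]; exact hlt
  have hmem : t ∈ cs.rightInvSeq (β.concat i) := by
    apply Nf_mem_rightInvSeq
    rw [hβconc]
    exact (Nf_eq_one_iff cs ht z).2 htinv
  rw [cs.rightInvSeq_concat] at hmem
  rw [List.concat_eq_append, List.mem_append] at hmem
  rcases hmem with hmem | hmem
  · -- t is a conjugate of an element of ris β
    rw [List.mem_map] at hmem
    obtain ⟨t', ht'mem, ht'⟩ := hmem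
    right
    have ht'refl : cs.IsReflection t' := cs.isReflection_of_mem_rightInvSeq β ht'mem
    have ht'inv : cs.IsRightInversion (π β) t' :=
      cs.isRightInversion_of_mem_rightInvSeq hβred ht'mem
    have htt' : t = σ i * t' * σ i := by
      rw [← ht']
      simp [MulAut.conj_apply, cs.inv_simple]
    refine ⟨t', ht'refl, ?_, ?_⟩
    · rw [hz, htt']
      simp [mul_assoc, cs.simple_mul_simple_self, cs.simple_mul_simple_cancel_left]
    · have hx : x * σ i = (z * σ i) * t' := by
        rw [hz, htt']
        simp [mul_assoc, cs.simple_mul_simple_cancel_left, ht'refl.mul_self]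
      rw [hx, hβ]
      exact ht'inv.2
  · -- t = σ i
    left
    simp only [List.mem_singleton] at hmem
    rw [hz, hmem]

/-- Lifting a Bruhat chain across an ascent of the top element. -/
theorem ble_lift_up {x y : W} (i : B) (h : BLe cs x y) (hy : ℓ y < ℓ (y * σ i)) :
    BLe cs x (y * σ i) ∧ BLe cs (x * σ i) (y * σ i) := by
  induction h using Relation.ReflTransGen.head_induction_on with
  | refl => exact ⟨BLe.single cs (bstep_simple cs i hy), BLe.refl cs _⟩
  | head hstep _ ih =>
    rename_i a c _
    obtain ⟨hc, hcσ⟩ := ih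
    obtain ⟨t, ht, hceq, hlen⟩ := hstep
    have h1 : BLe cs a (y * σ i) :=
      (BLe.single cs ⟨t, ht, hceq, hlen⟩).trans cs hc
    refine ⟨h1, ?_⟩
    rcases cs.length_mul_simple a i with ha | ha
    · -- ascent at a
      rcases cs.length_mul_simple c i with hcl | hcl
      · -- ascent at c
        refine (BLe.single cs ⟨σ i * t * σ i, ?_, ?_, by omega⟩).trans cs hcσ
        · have := ht.conj (σ i)
          rwa [cs.inv_simple] at this
        · rw [hceq]
          simp only [mul_assoc]
          rw [cs.simple_mul_simple_cancel_left]
      · -- descent at c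
        rcases lemC cs i ht hceq hlen (by omega) with heq | ⟨t', ht', heq, hlt⟩
        · rw [← heq]; exact hc
        · exact (BLe.single cs ⟨t', ht', heq, hlt⟩).trans cs hcσ
    · -- descent at a : x*σi → x → ... 
      have : BStep cs (a * σ i) a := by
        have : a = a * σ i * σ i := by
          rw [mul_assoc, cs.simple_mul_simple_self, mul_one]
        exact ⟨σ i, cs.isReflection_simple i, this, by omega⟩
      exact (BLe.single cs this).trans cs h1

/-- The right descent-minimum. -/
noncomputable def dminR (i : B) (x : W) : W := if ℓ (x * σ i) < ℓ x then x * σ i else x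

theorem dminR_ble (i : B) (x : W) : BLe cs (dminR cs i x) x := by
  unfold dminR
  split
  · rename_i h
    refine BLe.single cs ⟨σ i, cs.isReflection_simple i, ?_, ?_⟩
    · rw [mul_assoc, cs.simple_mul_simple_self, mul_one]
    · exact h
  · exact BLe.refl cs x

theorem dminR_ble_mul (i : B) (x : W) : BLe cs (dminR cs i x) (x * σ i) := by
  unfold dminR
  split
  · exact BLe.refl cs _
  · rename_i h
    rcases cs.length_mul_simple x i with h' | h'
    · exact BLe.single cs (bstep_simple cs i (by omega))
    · exact absurd (by omega) h

/-- Lifting a Bruhat chain across a descent of the top element. -/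
theorem ble_lift_down {x y : W} (i : B) (h : BLe cs x y) (hy : ℓ (y * σ i) < ℓ y) :
    BLe cs (dminR cs i x) (y * σ i) := by
  induction h using Relation.ReflTransGen.head_induction_on with
  | refl => rw [dminR, if_pos hy]; exact BLe.refl cs _
  | head hstep _ ih =>
    rename_i a c _
    obtain ⟨t, ht, hceq, hlen⟩ := hstep
    rcases cs.length_mul_simple a i with ha | ha
    · -- ascent at a: dminR a = a
      rw [dminR, if_neg (by omega)]
      rcases cs.length_mul_simple c i with hcl | hcl
      · -- ascent at c: dminR c = c
        rw [dminR, if_neg (by omega)] at ih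
        exact (BLe.single cs ⟨t, ht, hceq, hlen⟩).trans cs ih
      · -- descent at c: dminR c = c * σ i
        rw [dminR, if_pos (by omega)] at ih
        rcases lemC cs i ht hceq hlen (by omega) with heq | ⟨t', ht', heq, hlt⟩
        · -- c = a * σ i, so c * σ i = a
          have : a = c * σ i := by
            rw [heq, mul_assoc, cs.simple_mul_simple_self, mul_one]
          rw [this]
          exact ih
        · -- a → a*σi → c*σi
          refine (BLe.single cs (bstep_simple cs i (by omega))).trans cs ?_
          exact (BLe.single cs ⟨t', ht', heq, hlt⟩).trans cs ih
    · -- descent at a: dminR a = a * σ i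
      rw [dminR, if_pos (by omega)]
      rcases cs.length_mul_simple c i with hcl | hcl
      · -- ascent at c: dminR c = c;  a*σi → a → c ≤ c (then ih)
        rw [dminR, if_neg (by omega)] at ih
        have h1 : BStep cs (a * σ i) a :=
          ⟨σ i, cs.isReflection_simple i,
            by rw [mul_assoc, cs.simple_mul_simple_self, mul_one], by omega⟩
        exact ((BLe.single cs h1).trans cs (BLe.single cs ⟨t, ht, hceq, hlen⟩)).trans cs ih
      · -- descent at c: dminR c = c * σ i
        rw [dminR, if_pos (by omega)] at ih
        rcases lemC cs i ht hceq hlen (by omega) with heq | ⟨t', ht', heq, hlt⟩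
        · -- c = a * σ i : contradiction with ℓ(aσi) < ℓ a < ℓ c
          exfalso
          rw [heq] at hlen
          omega
        · exact (BLe.single cs ⟨t', ht', heq, hlt⟩).trans cs ih

end chain

section equivalence

theorem sublist_ble {ω : List B} (hred : cs.IsReduced ω) :
    ∀ {ω' : List B}, ω'.Sublist ω → BLe cs (π ω') (π ω) := by
  induction ω with
  | nil =>
    intro ω' hsub
    rw [List.sublist_nil.1 hsub]
    exact BLe.refl cs _
  | cons i χ ih =>
    intro ω' hsub
    have hχred : cs.IsReduced χ := by
      have := hred.drop 1
      simpa using this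
    have hlen : ℓ (σ i * π χ) = ℓ (π χ) + 1 := by
      have h1 : ℓ (π (i :: χ)) = (i :: χ).length := hred
      have h2 : ℓ (π χ) = χ.length := hχred
      rw [wordProd_cons] at h1
      rw [h1, h2, List.length_cons]
    rcases List.sublist_cons_iff.1 hsub with hsub' | ⟨χ', rfl, hsub'⟩
    · -- ω' is a sublist of χ
      have h1 : BLe cs (π ω') (π χ) := ih hχred hsub'
      have h2 : BLe cs (π χ) (π (i :: χ)) := by
        rw [wordProd_cons]
        exact BLe.single cs (bstep_simple_left cs i (by omega))
      exact h1.trans cs h2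
    · -- ω' = i :: χ'
      have h1 : BLe cs (π χ') (π χ) := ih hχred hsub'
      have h2 : BLe cs (π χ')⁻¹ (π χ)⁻¹ := ble_inv cs h1
      have hy : ℓ ((π χ)⁻¹ * σ i) > ℓ (π χ)⁻¹ := by
        have e : ((π χ)⁻¹ * σ i)⁻¹ = σ i * π χ := by
          rw [mul_inv_rev, inv_inv, cs.inv_simple]
        have : ℓ ((π χ)⁻¹ * σ i) = ℓ (σ i * π χ) := by
          rw [← cs.length_inv ((π χ)⁻¹ * σ i), e]
        rw [this, cs.length_inv]
        omega
      have h3 := (ble_lift_up cs i h2 hy).2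
      have h4 := ble_inv cs h3
      rw [wordProd_cons, wordProd_cons]
      have e1 : ((π χ')⁻¹ * σ i)⁻¹ = σ i * π χ' := by
        rw [mul_inv_rev, inv_inv, cs.inv_simple]
      have e2 : ((π χ)⁻¹ * σ i)⁻¹ = σ i * π χ := by
        rw [mul_inv_rev, inv_inv, cs.inv_simple]
      rwa [e1, e2] at h4

theorem ble_exists_sublist {u v : W} (h : BLe cs u v) :
    ∀ ω : List B, π ω = v → ∃ ω', ω'.Sublist ω ∧ π ω' = u := by
  induction h with
  | refl => exact fun ω hω => ⟨ω, List.Sublist.refl ω, hω⟩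
  | tail _ hstep ih =>
    rename_i b c _
    obtain ⟨t, ht, hc, hlen⟩ := hstep
    intro ω hω
    have hb : π ω * t = b := by
      rw [hω, hc, mul_assoc, ht.mul_self, mul_one]
    have hlt : ℓ (π ω * t) < ℓ (π ω) := by rw [hb, hω]; omega
    obtain ⟨ω₁, hsub₁, hπ₁⟩ := strong_exchange cs ω ht hlt
    obtain ⟨ω', hsub', hπ'⟩ := ih ω₁ (by rw [hπ₁, hb])
    exact ⟨ω', hsub'.trans hsub₁, hπ'⟩

theorem bruhatLE_iff_ble {u v : W} : BruhatLE cs u v ↔ BLe cs u v := by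
  constructor
  · rintro ⟨ω, hred, hv, ω', hsub, hu⟩
    rw [← hv, ← hu]
    exact sublist_ble cs hred hsub
  · intro h
    obtain ⟨ω, hred, hv⟩ := cs.exists_reduced_word' v
    obtain ⟨ω', hsub, hu⟩ := ble_exists_sublist cs h ω hv.symm
    exact ⟨ω, hred, hv.symm, ω', hsub, hu⟩

theorem bruhatLE_refl (x : W) : BruhatLE cs x x :=
  (bruhatLE_iff_ble cs).2 (BLe.refl cs x)

theorem bruhatLE_trans {x y z : W} (h : BruhatLE cs x y) (h' : BruhatLE cs y z) :
    BruhatLE cs x z :=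
  (bruhatLE_iff_ble cs).2 (((bruhatLE_iff_ble cs).1 h).trans cs ((bruhatLE_iff_ble cs).1 h'))

end equivalence

section minimum

theorem dminR_mono {x y : W} (i : B) (h : BLe cs x y) :
    BLe cs (dminR cs i x) (dminR cs i y) := by
  by_cases hy : ℓ (y * σ i) < ℓ y
  · have hd : dminR cs i y = y * σ i := by rw [dminR]; exact if_pos hy
    rw [hd]
    exact ble_lift_down cs i h hy
  · have hd : dminR cs i y = y := by rw [dminR]; exact if_neg hy
    rw [hd]
    exact (dminR_ble cs i x).trans cs h

/-- Greedy minimum over right multiplications by subwords. -/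
noncomputable def fr (x : W) : List B → W
  | [] => x
  | i :: l => fr (dminR cs i x) l

@[simp] theorem fr_nil (x : W) : fr cs x [] = x := rfl

theorem fr_cons (x : W) (i : B) (l : List B) : fr cs x (i :: l) = fr cs (dminR cs i x) l := rfl

theorem fr_mono {x y : W} (h : BLe cs x y) : ∀ l : List B, BLe cs (fr cs x l) (fr cs y l) := by
  intro l
  induction l generalizing x y with
  | nil => exact h
  | cons i l ih => exact ih (dminR_mono cs i h)

theorem fr_ble (x : W) (l : List B) : BLe cs (fr cs x l) x := by
  induction l generalizing x with
  | nil => exact BLe.refl cs x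
  | cons i l ih => exact (ih (dminR cs i x)).trans cs (dminR_ble cs i x)

theorem fr_ble_prod (x : W) {l ω' : List B} (hsub : ω'.Sublist l) :
    BLe cs (fr cs x l) (x * π ω') := by
  induction l generalizing x ω' with
  | nil =>
    rw [List.sublist_nil.1 hsub]
    simp only [wordProd_nil, mul_one]
    exact BLe.refl cs x
  | cons i l ih =>
    rcases List.sublist_cons_iff.1 hsub with hsub' | ⟨χ, rfl, hsub'⟩
    · exact (fr_mono cs (dminR_ble cs i x) l).trans cs (ih x hsub')
    · have h1 : BLe cs (fr cs (dminR cs i x) l) (fr cs (x * σ i) l) :=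
        fr_mono cs (dminR_ble_mul cs i x) l
      have h2 := ih (x * σ i) hsub'
      rw [fr_cons]
      refine (h1.trans cs h2).trans cs ?_
      rw [wordProd_cons, ← mul_assoc]
      exact BLe.refl cs _

theorem fr_exists (x : W) (l : List B) :
    ∃ ω' : List B, ω'.Sublist l ∧ fr cs x l = x * π ω' := by
  induction l generalizing x with
  | nil => exact ⟨[], List.Sublist.refl _, by simp⟩
  | cons i l ih =>
    rw [fr_cons]
    by_cases h : ℓ (x * σ i) < ℓ x
    · have hd : dminR cs i x = x * σ i := by rw [dminR]; exact if_pos h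
      rw [hd]
      obtain ⟨ω', hsub, heq⟩ := ih (x * σ i)
      exact ⟨i :: ω', List.cons_sublist_cons.2 hsub, by rw [heq, wordProd_cons, ← mul_assoc]⟩
    · have hd : dminR cs i x = x := by rw [dminR]; exact if_neg h
      rw [hd]
      obtain ⟨ω', hsub, heq⟩ := ih x
      exact ⟨ω', hsub.cons i, heq⟩

/-- Left analogue of `dminR`. -/
noncomputable def dminL (i : B) (x : W) : W := if ℓ (σ i * x) < ℓ x then σ i * x else x

theorem dminL_eq_inv (i : B) (x : W) : dminL cs i x = (dminR cs i x⁻¹)⁻¹ := by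
  rw [dminL, dminR]
  have hc : ℓ (σ i * x) = ℓ (x⁻¹ * σ i) := by
    rw [← cs.length_inv (σ i * x), mul_inv_rev, cs.inv_simple]
  have hx : ℓ x = ℓ x⁻¹ := (cs.length_inv x).symm
  rw [hc, hx]
  split
  · rw [mul_inv_rev, cs.inv_simple, inv_inv]
  · rw [inv_inv]

theorem dminL_mono {x y : W} (i : B) (h : BLe cs x y) :
    BLe cs (dminL cs i x) (dminL cs i y) := by
  rw [dminL_eq_inv, dminL_eq_inv]
  have := dminR_mono cs i (ble_inv cs h)
  have h2 := ble_inv cs this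
  exact h2

theorem dminL_ble (i : B) (x : W) : BLe cs (dminL cs i x) x := by
  rw [dminL_eq_inv]
  have := ble_inv cs (dminR_ble cs i x⁻¹)
  rwa [inv_inv] at this

theorem dminL_ble_mul (i : B) (x : W) : BLe cs (dminL cs i x) (σ i * x) := by
  rw [dminL_eq_inv]
  have := ble_inv cs (dminR_ble_mul cs i x⁻¹)
  rwa [mul_inv_rev, cs.inv_simple, inv_inv] at this

/-- Greedy minimum over left multiplications by subwords. -/
noncomputable def fl (x : W) : List B → W
  | [] => x
  | i :: l => dminL cs i (fl x l)

@[simp] theorem fl_nil (x : W) : fl cs x [] = x := rfl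

theorem fl_cons (x : W) (i : B) (l : List B) : fl cs x (i :: l) = dminL cs i (fl cs x l) := rfl

theorem fl_mono {x y : W} (h : BLe cs x y) : ∀ l : List B, BLe cs (fl cs x l) (fl cs y l) := by
  intro l
  induction l with
  | nil => exact h
  | cons i l ih => exact dminL_mono cs i ih

theorem fl_ble (x : W) (l : List B) : BLe cs (fl cs x l) x := by
  induction l with
  | nil => exact BLe.refl cs x
  | cons i l ih => exact (dminL_ble cs i _).trans cs ih

theorem fl_ble_prod (x : W) {l ω' : List B} (hsub : ω'.Sublist l) :
    BLe cs (fl cs x l) (π ω' * x) := by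
  induction l generalizing ω' with
  | nil =>
    rw [List.sublist_nil.1 hsub]
    simp only [wordProd_nil, one_mul]
    exact BLe.refl cs x
  | cons i l ih =>
    rcases List.sublist_cons_iff.1 hsub with hsub' | ⟨χ, rfl, hsub'⟩
    · exact (dminL_ble cs i _).trans cs (ih hsub')
    · have h3 := ble_inv cs (ih hsub')
      rw [fl_cons, wordProd_cons, mul_assoc]
      rcases cs.length_mul_simple (π χ * x)⁻¹ i with h4 | h4
      · -- ascent of (π χ * x)⁻¹ at i
        have h5 := (ble_lift_up cs i h3 (by omega)).2
        have h6 := ble_inv cs h5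
        rw [mul_inv_rev, mul_inv_rev, cs.inv_simple, inv_inv, inv_inv] at h6
        exact (dminL_ble_mul cs i _).trans cs h6
      · -- descent of (π χ * x)⁻¹ at i
        have h5 := ble_lift_down cs i h3 (by omega)
        have h6 := ble_inv cs h5
        rw [mul_inv_rev, cs.inv_simple, inv_inv, ← dminL_eq_inv] at h6
        exact h6

theorem fl_exists (x : W) (l : List B) :
    ∃ ω' : List B, ω'.Sublist l ∧ fl cs x l = π ω' * x := by
  induction l with
  | nil => exact ⟨[], List.Sublist.refl _, by simp⟩
  | cons i l ih =>
    obtain ⟨ω', hsub, heq⟩ := ih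
    rw [fl_cons, heq, dminL]
    split
    · exact ⟨i :: ω', List.cons_sublist_cons.2 hsub, by rw [wordProd_cons, mul_assoc]⟩
    · exact ⟨ω', hsub.cons i, rfl⟩

end minimum

end BrAux

/-- If `K ⊆ W` has a unique Bruhat-minimal element `u`, then for any `σ₁, σ₂ ∈ W` the set
`I(σ₁) K I(σ₂) = {a k b : a ≤ σ₁, k ∈ K, b ≤ σ₂}` has a unique minimal element, and this
element is the unique minimal element of `I(σ₁) u I(σ₂)`. -/
theorem stmt_2 (cs : CoxeterSystem M W) (K : Set W) (u : W) (hK : IsBrMin cs K u)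
    (σ₁ σ₂ : W) :
    ∃ m : W,
      IsBrMin cs
        {x | ∃ a, BruhatLE cs a σ₁ ∧ ∃ k ∈ K, ∃ b, BruhatLE cs b σ₂ ∧ x = a * k * b} m ∧
      IsBrMin cs
        {x | ∃ a, BruhatLE cs a σ₁ ∧ ∃ b, BruhatLE cs b σ₂ ∧ x = a * u * b} m := by
  obtain ⟨ω₁, hred₁, hw₁⟩ := cs.exists_reduced_word' σ₁
  obtain ⟨ω₂, hred₂, hw₂⟩ := cs.exists_reduced_word' σ₂
  refine ⟨BrAux.fl cs (BrAux.fr cs u ω₂) ω₁, ?_⟩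
  have hmem : ∃ a, BruhatLE cs a σ₁ ∧ ∃ b, BruhatLE cs b σ₂ ∧
      BrAux.fl cs (BrAux.fr cs u ω₂) ω₁ = a * u * b := by
    obtain ⟨ω₂', hsub₂, heq₂⟩ := BrAux.fr_exists cs u ω₂
    obtain ⟨ω₁', hsub₁, heq₁⟩ := BrAux.fl_exists cs (BrAux.fr cs u ω₂) ω₁
    refine ⟨cs.wordProd ω₁', ⟨ω₁, hred₁, hw₁.symm, ω₁', hsub₁, rfl⟩,
      cs.wordProd ω₂', ⟨ω₂, hred₂, hw₂.symm, ω₂', hsub₂, rfl⟩, ?_⟩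
    rw [heq₁, heq₂, mul_assoc]
  have hmin : ∀ x, (∃ a, BruhatLE cs a σ₁ ∧ ∃ k ∈ K, ∃ b, BruhatLE cs b σ₂ ∧ x = a * k * b) →
      BruhatLE cs (BrAux.fl cs (BrAux.fr cs u ω₂) ω₁) x := by
    rintro x ⟨a, ha, k, hk, b, hb, rfl⟩
    have hub : BrAux.BLe cs u k := (BrAux.bruhatLE_iff_ble cs).1 (hK.2 k hk)
    obtain ⟨ω₂'', hsub₂, hb2⟩ :=
      BrAux.ble_exists_sublist cs ((BrAux.bruhatLE_iff_ble cs).1 hb) ω₂ hw₂.symm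
    obtain ⟨ω₁'', hsub₁, ha1⟩ :=
      BrAux.ble_exists_sublist cs ((BrAux.bruhatLE_iff_ble cs).1 ha) ω₁ hw₁.symm
    have h1 : BrAux.BLe cs (BrAux.fr cs u ω₂) (k * b) := by
      refine (BrAux.fr_mono cs hub ω₂).trans cs ?_
      have := BrAux.fr_ble_prod cs k hsub₂
      rwa [hb2] at this
    have h2 : BrAux.BLe cs (BrAux.fl cs (BrAux.fr cs u ω₂) ω₁) (a * k * b) := by
      refine (BrAux.fl_mono cs h1 ω₁).trans cs ?_
      have := BrAux.fl_ble_prod cs (k * b) hsub₁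
      rwa [ha1, ← mul_assoc] at this
    exact (BrAux.bruhatLE_iff_ble cs).2 h2
  obtain ⟨a, ha, b, hb, heq⟩ := hmem
  refine ⟨⟨⟨a, ha, u, hK.1, b, hb, heq⟩, fun x hx => hmin x hx⟩,
    ⟨⟨a, ha, b, hb, heq⟩, fun x hx => ?_⟩⟩
  obtain ⟨a', ha', b', hb', heq'⟩ := hx
  exact hmin x ⟨a', ha', u, hK.1, b', hb', heq'⟩
end

section
/- Let (W,S) be a Coxeter system and let K be a subset of W that admits a unique minimal element u in the Bruhat order. Then, for any two standard parabolic subgroups W₁ and W₂ of W, the set W₁ K W₂ = { a k b : a ∈ W₁, k ∈ K, b ∈ W₂ } has a unique minimal element in the Bruhat order, and this element is the unique minimal element of the double coset W₁ u W₂ (which exists). In particular, any double coset W₁ w W₂ of a pair of standard parabolic subgroups has a unique minimal element in the Bruhat order. -/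
variable {B W : Type*} [Group W] {M : CoxeterMatrix B}

open List CoxeterSystem

set_option linter.unusedSectionVars false
set_option maxHeartbeats 1600000

namespace BruhatDev

variable {B W : Type*} [Group W] {M : CoxeterMatrix B} (cs : CoxeterSystem M W)

local prefix:100 "σ" => cs.simple
local prefix:100 "π" => cs.wordProd
local prefix:100 "ℓ" => cs.length

open scoped Classical

/-- parity-weight of `t` in a list. -/
noncomputable def wt (t : W) : List W → ZMod 2
  | [] => 0
  | a :: l => (if a = t then 1 else 0) + wt t l

variable {t : W}

omit [Group W] in
lemma zmod2_cases (x : ZMod 2) : x = 0 ∨ x = 1 := by revert x; decide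

lemma wt_nil : wt (W := W) t [] = 0 := rfl

lemma wt_cons (a : W) (l : List W) :
    wt t (a :: l) = (if a = t then 1 else 0) + wt t l := rfl

lemma wt_append (l₁ l₂ : List W) : wt t (l₁ ++ l₂) = wt t l₁ + wt t l₂ := by
  induction l₁ with
  | nil => simp [wt]
  | cons a l ih => simp [wt_cons, ih, add_assoc]

lemma mem_of_wt_ne_zero {l : List W} (h : wt t l ≠ 0) : t ∈ l := by
  induction l with
  | nil => simp [wt] at h
  | cons a l ih =>
    rw [wt_cons] at h
    by_cases ha : a = t
    · simp [ha]
    · simp only [ha, if_false, zero_add] at h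
      exact mem_cons_of_mem _ (ih h)

lemma wt_map_conj (g : W) (l : List W) :
    wt t (l.map (fun x => g * x * g⁻¹)) = wt (g⁻¹ * t * g) l := by
  induction l with
  | nil => simp [wt]
  | cons a l ih =>
    simp only [map_cons, wt_cons, ih]
    congr 1
    have : (g * a * g⁻¹ = t) ↔ (a = g⁻¹ * t * g) := by
      constructor
      · intro h; rw [← h]; group
      · intro h; rw [h]; group
    simp [this]

lemma wt_reverse (l : List W) : wt t l.reverse = wt t l := by
  induction l with
  | nil => rfl
  | cons a l ih => simp [wt_cons, wt_append, ih, wt, add_comm]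


noncomputable def sig (i : B) : Function.End (W × ZMod 2) :=
  fun p => (σ i * p.1 * σ i, p.2 + if p.1 = σ i then 1 else 0)

lemma ris_cons (i : B) (ω : List B) :
    cs.rightInvSeq (i :: ω) = ((π ω)⁻¹ * σ i * π ω) :: cs.rightInvSeq ω := rfl

lemma prod_sig_apply (ω : List B) (p : W × ZMod 2) :
    ((ω.map (sig cs)).prod : Function.End (W × ZMod 2)) p
      = (π ω * p.1 * (π ω)⁻¹, p.2 + wt p.1 (cs.rightInvSeq ω)) := by
  induction ω generalizing p with
  | nil => simp [wt, CoxeterSystem.wordProd_nil]; rfl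
  | cons i ω ih =>
    have : ((List.map (sig cs) (i :: ω)).prod : Function.End (W × ZMod 2)) p
        = sig cs i (((List.map (sig cs) ω).prod : Function.End (W × ZMod 2)) p) := by
      rw [List.map_cons, List.prod_cons]; rfl
    have hiff : (π ω * p.1 * (π ω)⁻¹ = σ i) ↔ ((π ω)⁻¹ * σ i * π ω = p.1) := by
      constructor
      · intro h; rw [← h]; group
      · intro h; rw [← h]; group
    rw [this, ih]
    show (σ i * (π ω * p.1 * (π ω)⁻¹) * σ i,
        (p.2 + wt p.1 (cs.rightInvSeq ω)) + if π ω * p.1 * (π ω)⁻¹ = σ i then 1 else 0) = _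
    rw [ris_cons, wt_cons, if_congr hiff rfl rfl]
    refine Prod.ext ?_ ?_
    · simp only [CoxeterSystem.wordProd_cons, mul_inv_rev, cs.inv_simple]
      group
    · show _ = p.2 + ((if (π ω)⁻¹ * σ i * π ω = p.1 then 1 else 0) + wt p.1 (cs.rightInvSeq ω))
      ring


omit [Group W] in
lemma alt_cons2 (i j : B) (m : ℕ) :
    CoxeterSystem.alternatingWord i j (2 * (m + 1))
      = i :: j :: CoxeterSystem.alternatingWord i j (2 * m) := by
  show CoxeterSystem.alternatingWord i j (2 * m + 1 + 1) = _
  rw [CoxeterSystem.alternatingWord_succ' i j (2 * m + 1),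
    CoxeterSystem.alternatingWord_succ' i j (2 * m)]
  simp [Nat.even_add_one, parity_simps]

lemma pow_sig_eq (i j : B) (m : ℕ) :
    (sig cs i * sig cs j) ^ m
      = ((CoxeterSystem.alternatingWord i j (2 * m)).map (sig cs)).prod := by
  induction m with
  | zero => simp [CoxeterSystem.alternatingWord]
  | succ m ih =>
    rw [pow_succ', ih, alt_cons2, List.map_cons, List.map_cons, List.prod_cons, List.prod_cons,
      mul_assoc]

omit [Group W] in
lemma drop_alt (i j : B) : ∀ (n d : ℕ), d ≤ n →
    (CoxeterSystem.alternatingWord i j n).drop d = CoxeterSystem.alternatingWord i j (n - d) := by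
  intro n
  induction n with
  | zero => intro d hd; interval_cases d; simp
  | succ n ih =>
    intro d hd
    match d with
    | 0 => simp
    | d + 1 =>
      rw [CoxeterSystem.alternatingWord_succ' i j n]
      show (CoxeterSystem.alternatingWord i j n).drop d = _
      rw [ih d (by omega)]
      congr 1
      omega

lemma simple_conj_z (i j : B) (c : ℕ) :
    σ j * (σ i * σ j) ^ c = ((σ i * σ j) ^ c)⁻¹ * σ j := by
  have h0 : σ j * (σ i * σ j) * (σ j)⁻¹ = (σ i * σ j)⁻¹ := by
    rw [cs.inv_simple, mul_inv_rev, cs.inv_simple, cs.inv_simple]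
    simp [mul_assoc, cs.simple_mul_simple_self]
  have h1 : σ j * (σ i * σ j) ^ c * (σ j)⁻¹ = ((σ i * σ j) ^ c)⁻¹ := by
    rw [← conj_pow, h0, inv_pow]
  rw [mul_inv_eq_iff_eq_mul] at h1
  rw [h1]

lemma g_eq (i j : B) (L : ℕ) :
    (π (CoxeterSystem.alternatingWord i j L))⁻¹ * π (CoxeterSystem.alternatingWord i j (L + 1))
      = σ j * (σ i * σ j) ^ L := by
  rcases Nat.even_or_odd L with ⟨c, hc⟩ | ⟨c, hc⟩
  · have hL2 : L / 2 = c := by omega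
    have hL12 : (L + 1) / 2 = c := by omega
    rw [cs.prod_alternatingWord_eq_mul_pow, cs.prod_alternatingWord_eq_mul_pow, hL2, hL12,
      if_pos (by exact ⟨c, hc⟩), if_neg (by simp [Nat.even_add_one]; exact ⟨c, hc⟩)]
    rw [one_mul, simple_conj_z, simple_conj_z]
    subst hc
    rw [pow_add]
    group
  · have hL2 : L / 2 = c := by omega
    have hL12 : (L + 1) / 2 = c + 1 := by omega
    rw [cs.prod_alternatingWord_eq_mul_pow, cs.prod_alternatingWord_eq_mul_pow, hL2, hL12,
      if_neg (by simp [hc, parity_simps]), if_pos (by simp [hc, parity_simps])]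
    rw [one_mul, mul_inv_rev, cs.inv_simple, mul_assoc, simple_conj_z, simple_conj_z]
    subst hc
    rw [pow_add, pow_add]
    group

lemma getD_ris_eq (ω : List B) (k : ℕ) (hk : k < ω.length) :
    (cs.rightInvSeq ω).getD k 1 = (π (ω.drop (k + 1)))⁻¹ * π (ω.drop k) := by
  rw [cs.getD_rightInvSeq, List.drop_eq_getElem_cons hk, CoxeterSystem.wordProd_cons]
  rw [List.getElem?_eq_getElem hk]
  simp [mul_assoc]

lemma getD_ris_alt (i j : B) (m k : ℕ) (hk : k < 2 * m) :
    (cs.rightInvSeq (CoxeterSystem.alternatingWord i j (2 * m))).getD k 1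
      = σ j * (σ i * σ j) ^ (2 * m - 1 - k) := by
  have hlen : (CoxeterSystem.alternatingWord i j (2 * m)).length = 2 * m :=
    CoxeterSystem.length_alternatingWord i j (2 * m)
  rw [getD_ris_eq cs _ k (by omega)]
  rw [drop_alt i j _ (k + 1) (by omega), drop_alt i j _ k (by omega)]
  have h1 : 2 * m - k = (2 * m - 1 - k) + 1 := by omega
  have h2 : 2 * m - (k + 1) = 2 * m - 1 - k := by omega
  rw [h1, h2, g_eq]

lemma wt_ris_alt_eq_zero (i j : B) (t : W) (hz : (σ i * σ j) ^ (M i j) = 1) :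
    wt t (cs.rightInvSeq (CoxeterSystem.alternatingWord i j (2 * M i j))) = 0 := by
  set m := M i j with hm
  set D := cs.rightInvSeq (CoxeterSystem.alternatingWord i j (2 * m)) with hD
  have hlen : D.length = 2 * m := by
    rw [hD, cs.length_rightInvSeq, CoxeterSystem.length_alternatingWord]
  have htd : D.take m = D.drop m := by
    apply List.ext_getElem
    · simp [hlen]; omega
    · intro k hk1 hk2
      have hk : k < m := by simp [hlen] at hk1; omega
      rw [List.getElem_take, List.getElem_drop]
      rw [← List.getD_eq_getElem D 1 (by omega), ← List.getD_eq_getElem D 1 (by omega)]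
      rw [hD, getD_ris_alt cs i j m k (by omega), getD_ris_alt cs i j m (m + k) (by omega)]
      have h3 : 2 * m - 1 - k = (2 * m - 1 - (m + k)) + m := by omega
      rw [h3, pow_add, hz, mul_one]
  calc wt t D = wt t (D.take m ++ D.drop m) := by rw [List.take_append_drop]
    _ = wt t (D.drop m) + wt t (D.drop m) := by rw [wt_append, htd]
    _ = 0 := CharTwo.add_self_eq_zero _

lemma sig_liftable : M.IsLiftable (sig cs) := by
  intro i j
  funext p
  have hz := cs.simple_mul_simple_pow i j
  rw [pow_sig_eq]
  show ((CoxeterSystem.alternatingWord i j (2 * M i j)).map (sig cs)).prod p = p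
  rw [prod_sig_apply]
  have hπ : π (CoxeterSystem.alternatingWord i j (2 * M i j)) = 1 := by
    rw [cs.prod_alternatingWord_eq_mul_pow]
    have : 2 * M i j / 2 = M i j := by omega
    rw [this, if_pos (by exact ⟨M i j, by omega⟩), one_mul, hz]
  rw [hπ, wt_ris_alt_eq_zero cs i j p.1 hz]
  simp


noncomputable def phi : W →* Function.End (W × ZMod 2) := cs.lift ⟨sig cs, sig_liftable cs⟩

noncomputable def eta (w t : W) : ZMod 2 := ((phi cs w) (t, 0)).2

lemma phi_wordProd (ω : List B) : phi cs (π ω) = ((ω.map (sig cs)).prod) := by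
  rw [CoxeterSystem.wordProd, map_list_prod, List.map_map]
  congr 1
  apply List.map_congr_left
  intro i _
  exact cs.lift_apply_simple _ i

lemma phi_apply (w t : W) (ε : ZMod 2) :
    (phi cs w) (t, ε) = (w * t * w⁻¹, ε + eta cs w t) := by
  obtain ⟨ω, rfl⟩ := cs.wordProd_surjective w
  rw [phi_wordProd, prod_sig_apply, eta, phi_wordProd, prod_sig_apply]
  simp

lemma eta_wordProd (ω : List B) (t : W) : eta cs (π ω) t = wt t (cs.rightInvSeq ω) := by
  rw [eta, phi_wordProd, prod_sig_apply]
  simp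

lemma eta_mul (w v t : W) : eta cs (w * v) t = eta cs v t + eta cs w (v * t * v⁻¹) := by
  have h : (phi cs (w * v)) (t, 0) = (phi cs w) ((phi cs v) (t, 0)) := by
    rw [map_mul]; rfl
  rw [phi_apply, phi_apply, phi_apply] at h
  have := congrArg Prod.snd h
  simpa [eta] using this

lemma isRightInversion_of_eta_eq_one {w t : W} (h : eta cs w t = 1) :
    cs.IsRightInversion w t := by
  obtain ⟨ω, hred, hw⟩ := cs.exists_reduced_word' w
  subst hw
  rw [eta_wordProd] at h
  have hmem : t ∈ cs.rightInvSeq ω := mem_of_wt_ne_zero (by rw [h]; decide)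
  exact cs.isRightInversion_of_mem_rightInvSeq hred hmem

lemma ris_append (l₁ l₂ : List B) :
    cs.rightInvSeq (l₁ ++ l₂)
      = (cs.rightInvSeq l₁).map (fun x => (π l₂)⁻¹ * x * π l₂) ++ cs.rightInvSeq l₂ := by
  induction l₁ with
  | nil => simp
  | cons a l ih =>
    rw [cons_append, ris_cons, ris_cons, ih, List.map_cons, cons_append,
      CoxeterSystem.wordProd_append]
    congr 1
    group

lemma lis_eq_map (ω : List B) :
    cs.leftInvSeq ω = (cs.rightInvSeq ω).map (fun x => π ω * x * (π ω)⁻¹) := by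
  induction ω with
  | nil => simp
  | cons a l ih =>
    show σ a :: List.map (⇑(MulAut.conj (σ a))) (cs.leftInvSeq l) = _
    rw [ris_cons, List.map_cons, ih, List.map_map]
    congr 1
    · rw [CoxeterSystem.wordProd_cons]
      group
    · apply List.map_congr_left
      intro x _
      simp only [Function.comp_apply, MulAut.conj_apply, CoxeterSystem.wordProd_cons]
      group

lemma wt_map_conj' (t g : W) (l : List W) :
    wt t (l.map (fun x => g⁻¹ * x * g)) = wt (g * t * g⁻¹) l := by
  have := wt_map_conj (t := t) (g := g⁻¹) (l := l)
  simpa using this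

lemma eta_self {t : W} (ht : cs.IsReflection t) : eta cs t t = 1 := by
  obtain ⟨v, j, rfl⟩ := ht
  obtain ⟨ρ, rfl⟩ := cs.wordProd_surjective v
  have hτ : π ρ * σ j * (π ρ)⁻¹ = π (ρ ++ j :: ρ.reverse) := by
    rw [CoxeterSystem.wordProd_append, CoxeterSystem.wordProd_cons,
      CoxeterSystem.wordProd_reverse]
    group
  rw [hτ, eta_wordProd, ← hτ, ris_append, wt_append]
  have h1 : wt (π ρ * σ j * (π ρ)⁻¹)
      ((cs.rightInvSeq ρ).map (fun x => (π (j :: ρ.reverse))⁻¹ * x * π (j :: ρ.reverse)))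
      = wt (σ j) (cs.rightInvSeq ρ) := by
    rw [wt_map_conj']
    congr 1
    rw [CoxeterSystem.wordProd_cons, CoxeterSystem.wordProd_reverse]
    simp [mul_inv_rev, inv_inv, cs.inv_simple, mul_assoc, inv_mul_cancel_left,
      cs.simple_mul_simple_cancel_left]
  have h2 : wt (π ρ * σ j * (π ρ)⁻¹) (cs.rightInvSeq (j :: ρ.reverse))
      = 1 + wt (σ j) (cs.rightInvSeq ρ) := by
    rw [ris_cons, wt_cons, CoxeterSystem.wordProd_reverse, inv_inv]
    rw [if_pos rfl]
    congr 1
    rw [cs.rightInvSeq_reverse, wt_reverse, lis_eq_map, wt_map_conj]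
    congr 1
    simp [mul_assoc, inv_mul_cancel_left, mul_inv_cancel_left]
  rw [h1, h2]
  have h3 : ∀ q : ZMod 2, q + (1 + q) = 1 := by decide
  exact h3 _

lemma eta_eq_one_iff {w t : W} (ht : cs.IsReflection t) :
    eta cs w t = 1 ↔ ℓ (w * t) < ℓ w := by
  constructor
  · intro h
    exact (isRightInversion_of_eta_eq_one cs h).2
  · intro h
    by_contra hne
    have h0 : eta cs w t = 0 := by
      rcases zmod2_cases (eta cs w t) with h' | h'
      · exact h'
      · exact absurd h' hne
    have hw : w * t * t = w := by rw [mul_assoc, ht.mul_self, mul_one]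
    have h1 := eta_mul cs (w * t) t t
    rw [hw] at h1
    have htt : t * t * t⁻¹ = t := by rw [ht.mul_self, one_mul, ht.inv]
    rw [htt, eta_self cs ht, h0] at h1
    have h2 : eta cs (w * t) t = 1 := by
      rcases zmod2_cases (eta cs (w * t) t) with h' | h'
      · rw [h'] at h1; simp at h1
      · exact h'
    have h3 := (isRightInversion_of_eta_eq_one cs h2).2
    rw [hw] at h3
    omega


lemma strong_exchange_right (ω : List B) {t : W} (ht : cs.IsReflection t)
    (h : ℓ (π ω * t) < ℓ (π ω)) :
    ∃ k, k < ω.length ∧ π (ω.eraseIdx k) = π ω * t := by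
  have h1 : eta cs (π ω) t = 1 := (eta_eq_one_iff cs ht).mpr h
  rw [eta_wordProd] at h1
  have hmem : t ∈ cs.rightInvSeq ω := mem_of_wt_ne_zero (by rw [h1]; decide)
  obtain ⟨k, hk, hkt⟩ := List.mem_iff_getElem.mp hmem
  have hk' : k < ω.length := by
    have := cs.length_rightInvSeq ω
    omega
  refine ⟨k, hk', ?_⟩
  rw [← cs.wordProd_mul_getD_rightInvSeq ω k]
  congr 1
  rw [List.getD_eq_getElem _ 1 hk]
  exact hkt


def brS (u v : W) : Prop := ∃ t, cs.IsReflection t ∧ v = u * t ∧ ℓ u < ℓ v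

def brC (u v : W) : Prop := Relation.ReflTransGen (brS cs) u v

lemma brC_refl (u : W) : brC cs u u := Relation.ReflTransGen.refl

lemma brC_trans {u v w : W} (h1 : brC cs u v) (h2 : brC cs v w) : brC cs u w :=
  Relation.ReflTransGen.trans h1 h2

lemma length_le_of_brC {u v : W} (h : brC cs u v) : ℓ u ≤ ℓ v := by
  induction h with
  | refl => exact le_rfl
  | tail hab hbc ih =>
    obtain ⟨t, _, rfl, hlt⟩ := hbc
    omega

lemma eq_of_brC_of_length_le {u v : W} (h : brC cs u v) (hle : ℓ v ≤ ℓ u) : u = v := by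
  rcases Relation.ReflTransGen.cases_tail h with rfl | ⟨c, hc, hs⟩
  · rfl
  · obtain ⟨t, _, rfl, hlt⟩ := hs
    have := length_le_of_brC cs hc
    omega

lemma brS_right_up {x : W} (i : B) (h : ℓ x < ℓ (x * σ i)) : brS cs x (x * σ i) :=
  ⟨σ i, cs.isReflection_simple i, rfl, h⟩

lemma brS_right_down {x : W} (i : B) (h : ℓ (x * σ i) < ℓ x) : brS cs (x * σ i) x :=
  ⟨σ i, cs.isReflection_simple i, (cs.simple_mul_simple_cancel_right i).symm, h⟩

lemma brS_left_up {x : W} (i : B) (h : ℓ x < ℓ (σ i * x)) : brS cs x (σ i * x) := by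
  refine ⟨x⁻¹ * σ i * x, ?_, by group, h⟩
  have := (cs.isReflection_simple i).conj x⁻¹
  simpa using this

lemma brS_left_down {x : W} (i : B) (h : ℓ (σ i * x) < ℓ x) : brS cs (σ i * x) x := by
  refine ⟨x⁻¹ * σ i * x, ?_, ?_, h⟩
  · have := (cs.isReflection_simple i).conj x⁻¹
    simpa using this
  · have e : (σ i * x) * (x⁻¹ * σ i * x) = σ i * σ i * x := by group
    rw [e, cs.simple_mul_simple_self, one_mul]

lemma brC_inv {u v : W} (h : brC cs u v) : brC cs u⁻¹ v⁻¹ := by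
  induction h with
  | refl => exact brC_refl cs _
  | @tail b c hab hbc ih =>
    obtain ⟨t, ht, rfl, hlt⟩ := hbc
    refine ih.tail ⟨b * t * b⁻¹, ht.conj b, ?_, ?_⟩
    · rw [mul_inv_rev, ht.inv]
      group
    · rw [cs.length_inv, cs.length_inv]
      exact hlt

lemma sublist_of_brC {u v : W} (h : brC cs u v) :
    ∀ ω : List B, π ω = v → ∃ ω', ω'.Sublist ω ∧ π ω' = u := by
  induction h with
  | refl => exact fun ω hω => ⟨ω, List.Sublist.refl _, hω⟩
  | @tail b c hab hbc ih =>
    intro ω hω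
    obtain ⟨t, ht, rfl, hlt⟩ := hbc
    have hbt : b * t * t = b := by rw [mul_assoc, ht.mul_self, mul_one]
    have h2 : ℓ (π ω * t) < ℓ (π ω) := by
      rw [hω, hbt]
      exact hlt
    obtain ⟨k, hk, he⟩ := strong_exchange_right cs ω ht h2
    have he' : π (ω.eraseIdx k) = b := by rw [he, hω, hbt]
    obtain ⟨ω', hsub, hp⟩ := ih (ω.eraseIdx k) he'
    exact ⟨ω', hsub.trans (List.eraseIdx_sublist ω k), hp⟩

theorem liftZ (n : ℕ) :
    (∀ i : B, ∀ w u : W, ℓ w = n → ℓ w < ℓ (σ i * w) → brC cs u w →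
        brC cs (σ i * u) (σ i * w)) ∧
    (∀ i : B, ∀ w u : W, ℓ w = n → ℓ (σ i * w) < ℓ w → brC cs u w → ℓ u < ℓ (σ i * u) →
        brC cs u (σ i * w)) := by
  induction n using Nat.strong_induction_on with
  | _ n IH =>
  have lift : ∀ m, m < n → ∀ i : B, ∀ w u : W, ℓ w = m → ℓ w < ℓ (σ i * w) → brC cs u w →
      brC cs (σ i * u) (σ i * w) := fun m hm => (IH m hm).1
  have z3 : ∀ m, m < n → ∀ i : B, ∀ w u : W, ℓ w = m → ℓ (σ i * w) < ℓ w → brC cs u w →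
      ℓ u < ℓ (σ i * u) → brC cs u (σ i * w) := fun m hm => (IH m hm).2
  constructor
  · intro i w u hn hup huw
    by_cases hu : ℓ u < ℓ (σ i * u)
    · rcases Relation.ReflTransGen.cases_tail huw with rfl | ⟨c, hc, hs⟩
      · exact brC_refl cs _
      obtain ⟨t, ht, rfl, hlt⟩ := hs
      by_cases hcase : ℓ c < ℓ (σ i * c)
      · have h1 : brC cs (σ i * u) (σ i * c) := lift (ℓ c) (by omega) i c u rfl hcase hc
        refine h1.tail ⟨t, ht, by group, ?_⟩
        have e1 : ℓ (σ i * c) = ℓ c + 1 := by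
          rcases cs.length_simple_mul c i with h | h <;> omega
        omega
      · have hdown : ℓ (σ i * c) < ℓ c := by
          rcases cs.length_simple_mul c i with h | h <;> omega
        have h1 : brC cs u (σ i * c) := z3 (ℓ c) (by omega) i c u rfl hdown hc hu
        have h2 : brC cs (σ i * u) (σ i * (σ i * c)) := by
          refine lift (ℓ (σ i * c)) (by omega) i (σ i * c) u rfl ?_ h1
          rw [cs.simple_mul_simple_cancel_left]
          exact hdown
        rw [cs.simple_mul_simple_cancel_left] at h2
        exact (h2.tail ⟨t, ht, rfl, hlt⟩).tail (brS_left_up cs i hup)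
    · have hud : ℓ (σ i * u) < ℓ u := by
        rcases cs.length_simple_mul u i with h | h <;> omega
      exact Relation.ReflTransGen.head (brS_left_down cs i hud)
        (huw.tail (brS_left_up cs i hup))
  · intro i w u hn hdw huw hu
    rcases Relation.ReflTransGen.cases_tail huw with rfl | ⟨d, hd, hs⟩
    · omega
    obtain ⟨t, ht, rfl, hlt⟩ := hs
    by_cases hcase : ℓ (σ i * d) < ℓ d
    · have h1 : brC cs u (σ i * d) := z3 (ℓ d) (by omega) i d u rfl hcase hd hu
      refine h1.tail ⟨t, ht, by group, ?_⟩
      have e1 : ℓ (σ i * d) + 1 = ℓ d := by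
        rcases cs.length_simple_mul d i with h | h <;> omega
      have e2 : ℓ (σ i * (d * t)) + 1 = ℓ (d * t) := by
        rcases cs.length_simple_mul (d * t) i with h | h <;> omega
      omega
    · have hupd : ℓ d < ℓ (σ i * d) := by
        rcases cs.length_simple_mul d i with h | h <;> omega
      by_cases hde : σ i * (d * t) = d
      · rw [hde]; exact hd
      · have e1 : ℓ (σ i * d) = ℓ d + 1 := by
          rcases cs.length_simple_mul d i with h | h <;> omega
        have e2 : ℓ (σ i * (d * t)) + 1 = ℓ (d * t) := by
          rcases cs.length_simple_mul (d * t) i with h | h <;> omega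
        have hpar : ℓ (d * t) % 2 ≠ ℓ d % 2 := by
          have hmod := cs.length_mul_mod_two d t
          obtain ⟨r, hr⟩ := ht.odd_length
          omega
        have hkey : ℓ (σ i * d) < ℓ (σ i * (d * t)) := by
          by_contra hcon
          have h5 : ℓ (σ i * d) = ℓ (d * t) := by omega
          obtain ⟨ρ₁, hρred, hρ⟩ := cs.exists_reduced_word' (σ i * (d * t))
          have hw : π (i :: ρ₁) = d * t := by
            rw [CoxeterSystem.wordProd_cons, ← hρ, cs.simple_mul_simple_cancel_left]
          have hbt : d * t * t = d := by rw [mul_assoc, ht.mul_self, mul_one]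
          have h6 : ℓ (π (i :: ρ₁) * t) < ℓ (π (i :: ρ₁)) := by
            rw [hw, hbt]
            exact hlt
          obtain ⟨k, hk, he⟩ := strong_exchange_right cs (i :: ρ₁) ht h6
          have he' : π ((i :: ρ₁).eraseIdx k) = d := by rw [he, hw, hbt]
          match k, hk with
          | 0, hk =>
            rw [List.eraseIdx_cons_zero] at he'
            exact hde (hρ.trans he')
          | k + 1, hk =>
            rw [List.eraseIdx_cons_succ, CoxeterSystem.wordProd_cons] at he'
            have h7 : π (ρ₁.eraseIdx k) = σ i * d := by
              rw [← he', cs.simple_mul_simple_cancel_left]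
            have h8 : ℓ (σ i * d) ≤ (ρ₁.eraseIdx k).length := h7 ▸ cs.length_wordProd_le _
            have hkρ : k < ρ₁.length := by
              simp only [List.length_cons] at hk
              omega
            have h9 : (ρ₁.eraseIdx k).length + 1 = ρ₁.length := by
              rw [List.length_eraseIdx]
              simp only [hkρ, if_true]
              omega
            have h10 : ρ₁.length = ℓ (σ i * (d * t)) := by
              have := hρred
              unfold CoxeterSystem.IsReduced at this
              rw [← hρ] at this
              omega
            omega
        have h2 : brC cs (σ i * u) (σ i * d) := lift (ℓ d) (by omega) i d u rfl hupd hd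
        exact (Relation.ReflTransGen.head (brS_left_up cs i hu) h2).tail
          ⟨t, ht, by group, hkey⟩

lemma brC_of_sublist_reduced :
    ∀ (ω ω' : List B), cs.IsReduced ω → ω'.Sublist ω → brC cs (π ω') (π ω) := by
  intro ω
  induction ω with
  | nil =>
    intro ω' _ hs
    rw [List.sublist_nil.mp hs]
    exact brC_refl cs _
  | cons i ρ ih =>
    intro ω' hred hs
    have hρred : cs.IsReduced ρ := by
      have := hred.drop 1
      simpa using this
    have hup : ℓ (π ρ) < ℓ (σ i * π ρ) := by
      have h1 : ℓ (π (i :: ρ)) = ρ.length + 1 := by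
        rw [hred]
        simp
      have h2 : ℓ (π ρ) ≤ ρ.length := cs.length_wordProd_le ρ
      rw [CoxeterSystem.wordProd_cons] at h1
      omega
    rcases List.sublist_cons_iff.mp hs with h | ⟨γ, rfl, hγ⟩
    · have step : brS cs (π ρ) (π (i :: ρ)) := by
        rw [CoxeterSystem.wordProd_cons]
        exact brS_left_up cs i hup
      exact (ih ω' hρred h).tail step
    · rw [CoxeterSystem.wordProd_cons, CoxeterSystem.wordProd_cons]
      exact (liftZ cs (ℓ (π ρ))).1 i (π ρ) (π γ) rfl hup (ih γ hρred hγ)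


lemma brC_of_bruhatLE {u v : W} (h : BruhatLE cs u v) : brC cs u v := by
  obtain ⟨ω, hred, rfl, ω', hsub, rfl⟩ := h
  exact brC_of_sublist_reduced cs ω ω' hred hsub

lemma bruhatLE_of_brC {u v : W} (h : brC cs u v) : BruhatLE cs u v := by
  obtain ⟨ω, hred, hv⟩ := cs.exists_reduced_word' v
  obtain ⟨ω', hsub, hu⟩ := sublist_of_brC cs h ω hv.symm
  exact ⟨ω, hred, hv.symm, ω', hsub, hu⟩

lemma stepL (j : B) {u v : W} (h : brC cs u v) :
    brC cs (σ j * u) (σ j * v) ∨ brC cs u (σ j * v) := by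
  by_cases hv : ℓ v < ℓ (σ j * v)
  · exact Or.inl ((liftZ cs (ℓ v)).1 j v u rfl hv h)
  · have hvd : ℓ (σ j * v) < ℓ v := by
      rcases cs.length_simple_mul v j with h' | h' <;> omega
    by_cases hu : ℓ u < ℓ (σ j * u)
    · exact Or.inr ((liftZ cs (ℓ v)).2 j v u rfl hvd h hu)
    · have hud : ℓ (σ j * u) < ℓ u := by
        rcases cs.length_simple_mul u j with h' | h' <;> omega
      left
      have h1 : brC cs (σ j * u) v := Relation.ReflTransGen.head (brS_left_down cs j hud) h
      have h2 : ℓ (σ j * u) < ℓ (σ j * (σ j * u)) := by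
        rw [cs.simple_mul_simple_cancel_left]
        exact hud
      exact (liftZ cs (ℓ v)).2 j v (σ j * u) rfl hvd h1 h2

lemma stepR (j : B) {u v : W} (h : brC cs u v) :
    brC cs (u * σ j) (v * σ j) ∨ brC cs u (v * σ j) := by
  have h' := brC_inv cs h
  rcases stepL cs j h' with h1 | h1
  · left
    have := brC_inv cs h1
    simpa [mul_inv_rev, cs.inv_simple] using this
  · right
    have := brC_inv cs h1
    simpa [mul_inv_rev, cs.inv_simple] using this

lemma upclose_left (X : Set B) (l : List B) (hl : ∀ j ∈ l, j ∈ X) {u v : W}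
    (h : brC cs u v) :
    ∃ a ∈ Subgroup.closure (cs.simple '' X), brC cs (a * u) (π l * v) := by
  induction l with
  | nil => exact ⟨1, one_mem _, by simpa using h⟩
  | cons j l' ih =>
    obtain ⟨a, ha, hbr⟩ := ih (fun k hk => hl k (List.mem_cons_of_mem _ hk))
    have hj : σ j ∈ Subgroup.closure (cs.simple '' X) :=
      Subgroup.subset_closure ⟨j, hl j List.mem_cons_self, rfl⟩
    rcases stepL cs j hbr with h1 | h1
    · exact ⟨σ j * a, mul_mem hj ha,
        by simpa [CoxeterSystem.wordProd_cons, mul_assoc] using h1⟩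
    · exact ⟨a, ha, by simpa [CoxeterSystem.wordProd_cons, mul_assoc] using h1⟩

lemma upclose_right (X : Set B) (r : List B) (hr : ∀ j ∈ r, j ∈ X) {u v : W}
    (h : brC cs u v) :
    ∃ b ∈ Subgroup.closure (cs.simple '' X), brC cs (u * b) (v * π r) := by
  induction r using List.reverseRecOn with
  | nil => exact ⟨1, one_mem _, by simpa using h⟩
  | append_singleton r' j ih =>
    obtain ⟨b, hb, hbr⟩ := ih (fun k hk => hr k (by simp [hk]))
    have hj : σ j ∈ Subgroup.closure (cs.simple '' X) :=
      Subgroup.subset_closure ⟨j, hr j (by simp), rfl⟩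
    rcases stepR cs j hbr with h1 | h1
    · exact ⟨b * σ j, mul_mem hb hj,
        by simpa [CoxeterSystem.wordProd_append, mul_assoc] using h1⟩
    · exact ⟨b, hb, by simpa [CoxeterSystem.wordProd_append, mul_assoc] using h1⟩

lemma df_le (X₁ X₂ : Set B) {x : W}
    (h1 : ∀ j ∈ X₁, ℓ x ≤ ℓ (σ j * x)) (h2 : ∀ j ∈ X₂, ℓ x ≤ ℓ (x * σ j))
    (l r : List B) (hl : ∀ j ∈ l, j ∈ X₁) (hr : ∀ j ∈ r, j ∈ X₂) :
    brC cs x (π l * x * π r) := by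
  have hright : ∀ r' : List B, (∀ j ∈ r', j ∈ X₂) → brC cs x (x * π r') := by
    intro r'
    induction r' using List.reverseRecOn with
    | nil => intro _; simpa using brC_refl cs x
    | append_singleton r'' j ih =>
      intro hr'
      have hbr := ih (fun k hk => hr' k (by simp [hk]))
      have hj := hr' j (by simp)
      have hasc : ℓ x < ℓ (x * σ j) := by
        rcases cs.length_mul_simple x j with h' | h'
        · omega
        · have := h2 j hj; omega
      rcases stepR cs j hbr with h1' | h1'
      · have : brC cs x (x * π r'' * σ j) :=
          Relation.ReflTransGen.head (brS_right_up cs j hasc) h1'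
        simpa [CoxeterSystem.wordProd_append, mul_assoc] using this
      · simpa [CoxeterSystem.wordProd_append, mul_assoc] using h1'
  have hleft : ∀ l' : List B, (∀ j ∈ l', j ∈ X₁) → ∀ v : W, brC cs x v →
      brC cs x (π l' * v) := by
    intro l'
    induction l' with
    | nil => intro _ v hv; simpa using hv
    | cons j l'' ih =>
      intro hl' v hv
      have hbr := ih (fun k hk => hl' k (List.mem_cons_of_mem _ hk)) v hv
      have hj := hl' j List.mem_cons_self
      have hasc : ℓ x < ℓ (σ j * x) := by
        rcases cs.length_simple_mul x j with h' | h'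
        · omega
        · have := h1 j hj; omega
      rcases stepL cs j hbr with h1' | h1'
      · have : brC cs x (σ j * (π l'' * v)) :=
          Relation.ReflTransGen.head (brS_left_up cs j hasc) h1'
        simpa [CoxeterSystem.wordProd_cons, mul_assoc] using this
      · simpa [CoxeterSystem.wordProd_cons, mul_assoc] using h1'
  have := hleft l hl (x * π r) (hright r hr)
  simpa [mul_assoc] using this

lemma exists_word_of_mem_closure {X : Set B} {a : W}
    (ha : a ∈ Subgroup.closure (cs.simple '' X)) :
    ∃ l : List B, (∀ j ∈ l, j ∈ X) ∧ π l = a := by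
  induction ha using Subgroup.closure_induction with
  | mem x hx =>
    obtain ⟨j, hj, rfl⟩ := hx
    exact ⟨[j], by simpa using hj, by simp⟩
  | one => exact ⟨[], by simp, by simp⟩
  | mul x y hx hy ihx ihy =>
    obtain ⟨l1, hl1, rfl⟩ := ihx
    obtain ⟨l2, hl2, rfl⟩ := ihy
    refine ⟨l1 ++ l2, ?_, by rw [CoxeterSystem.wordProd_append]⟩
    intro j hj
    rcases List.mem_append.mp hj with h | h
    exacts [hl1 j h, hl2 j h]
  | inv x hx ihx =>
    obtain ⟨l, hl, rfl⟩ := ihx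
    exact ⟨l.reverse, fun j hj => hl j (List.mem_reverse.mp hj),
      by rw [cs.wordProd_reverse]⟩

lemma exists_brC_min (W₁ W₂ : Subgroup W) (X₁ X₂ : Set B)
    (hW₁ : W₁ = Subgroup.closure (cs.simple '' X₁))
    (hW₂ : W₂ = Subgroup.closure (cs.simple '' X₂)) (w : W) :
    ∃ m ∈ dblCoset W₁ W₂ w, ∀ x ∈ dblCoset W₁ W₂ w, brC cs m x := by
  have hne : (dblCoset W₁ W₂ w).Nonempty := ⟨w, 1, one_mem _, 1, one_mem _, by simp⟩
  obtain ⟨m, hmD, hmin⟩ : ∃ m ∈ dblCoset W₁ W₂ w, ∀ x ∈ dblCoset W₁ W₂ w, ℓ m ≤ ℓ x := by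
    obtain ⟨x0, hx0⟩ := hne
    have h1 : (cs.length '' dblCoset W₁ W₂ w).Nonempty := ⟨ℓ x0, ⟨x0, hx0, rfl⟩⟩
    obtain ⟨m, hmD, hm⟩ := Nat.sInf_mem h1
    exact ⟨m, hmD, fun x hx => hm ▸ Nat.sInf_le ⟨x, hx, rfl⟩⟩
  refine ⟨m, hmD, ?_⟩
  suffices h : ∀ n, ∀ x ∈ dblCoset W₁ W₂ w, ℓ x ≤ n → brC cs m x from
    fun x hx => h (ℓ x) x hx le_rfl
  intro n
  induction n using Nat.strong_induction_on with
  | _ n IH =>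
  intro x hx hxn
  by_cases hd1 : ∃ j ∈ X₁, ℓ (σ j * x) < ℓ x
  · obtain ⟨j, hj, hjd⟩ := hd1
    have hsx : σ j * x ∈ dblCoset W₁ W₂ w := by
      obtain ⟨a, ha, b, hb, rfl⟩ := hx
      refine ⟨σ j * a, mul_mem ?_ ha, b, hb, by group⟩
      rw [hW₁]
      exact Subgroup.subset_closure ⟨j, hj, rfl⟩
    have h1 : brC cs m (σ j * x) := IH (ℓ (σ j * x)) (by omega) (σ j * x) hsx le_rfl
    exact h1.tail (brS_left_down cs j hjd)
  by_cases hd2 : ∃ j ∈ X₂, ℓ (x * σ j) < ℓ x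
  · obtain ⟨j, hj, hjd⟩ := hd2
    have hsx : x * σ j ∈ dblCoset W₁ W₂ w := by
      obtain ⟨a, ha, b, hb, rfl⟩ := hx
      refine ⟨a, ha, b * σ j, mul_mem hb ?_, by group⟩
      rw [hW₂]
      exact Subgroup.subset_closure ⟨j, hj, rfl⟩
    have h1 : brC cs m (x * σ j) := IH (ℓ (x * σ j)) (by omega) (x * σ j) hsx le_rfl
    exact h1.tail (brS_right_down cs j hjd)
  push_neg at hd1 hd2
  obtain ⟨a, ha, b, hb, hxw⟩ := hx
  obtain ⟨a0, ha0, b0, hb0, hmw⟩ := hmD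
  have hm_eq : m = (a0 * a⁻¹) * x * (b⁻¹ * b0) := by
    rw [hmw, hxw]
    group
  obtain ⟨l, hlX, hl⟩ := exists_word_of_mem_closure cs
    (show a0 * a⁻¹ ∈ Subgroup.closure (cs.simple '' X₁) from
      hW₁ ▸ mul_mem ha0 (inv_mem ha))
  obtain ⟨r, hrX, hr⟩ := exists_word_of_mem_closure cs
    (show b⁻¹ * b0 ∈ Subgroup.closure (cs.simple '' X₂) from
      hW₂ ▸ mul_mem (inv_mem hb) hb0)
  have hxm : brC cs x m := by
    rw [hm_eq, ← hl, ← hr]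
    exact df_le cs X₁ X₂ hd1 hd2 l r hlX hrX
  have hxeq : x = m := eq_of_brC_of_length_le cs hxm (hmin x ⟨a, ha, b, hb, hxw⟩)
  rw [← hxeq]
  exact brC_refl cs x


end BruhatDev

open BruhatDev in
/-- If `K ⊆ W` has a unique Bruhat-minimal element `u`, then for any two standard
parabolic subgroups `W₁, W₂`, the set `W₁ K W₂` has a unique minimal element, and this
element is the unique minimal element of the double coset `W₁ u W₂`.  In particular,
every double coset of a pair of standard parabolic subgroups has a unique minimal
element. -/
theorem stmt_4 (cs : CoxeterSystem M W) (W₁ W₂ : Subgroup W)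
    (h₁ : IsStdParabolic cs W₁) (h₂ : IsStdParabolic cs W₂) :
    (∀ (K : Set W) (u : W), IsBrMin cs K u →
      ∃ m : W,
        IsBrMin cs {x | ∃ a ∈ W₁, ∃ k ∈ K, ∃ b ∈ W₂, x = a * k * b} m ∧
        IsBrMin cs (dblCoset W₁ W₂ u) m) ∧
    (∀ w : W, ∃ m : W, IsBrMin cs (dblCoset W₁ W₂ w) m) := by
  obtain ⟨X₁, hW₁⟩ := h₁
  obtain ⟨X₂, hW₂⟩ := h₂
  constructor
  · intro K u hKu
    obtain ⟨m, hmD, hmin⟩ := exists_brC_min cs W₁ W₂ X₁ X₂ hW₁ hW₂ u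
    refine ⟨m, ⟨?_, ?_⟩, ⟨hmD, fun x hx => bruhatLE_of_brC cs (hmin x hx)⟩⟩
    · obtain ⟨a0, ha0, b0, hb0, hmw⟩ := hmD
      exact ⟨a0, ha0, u, hKu.1, b0, hb0, hmw⟩
    · rintro x ⟨a, ha, k, hk, b, hb, rfl⟩
      have huk : brC cs u k := brC_of_bruhatLE cs (hKu.2 k hk)
      obtain ⟨r, hrX, hr⟩ := exists_word_of_mem_closure cs (hW₂ ▸ hb)
      obtain ⟨l, hlX, hl⟩ := exists_word_of_mem_closure cs (hW₁ ▸ ha)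
      obtain ⟨b', hb', hbr1⟩ := upclose_right cs X₂ r hrX huk
      obtain ⟨a', ha', hbr2⟩ := upclose_left cs X₁ l hlX hbr1
      have hmem : a' * (u * b') ∈ dblCoset W₁ W₂ u :=
        ⟨a', hW₁ ▸ ha', b', hW₂ ▸ hb', by group⟩
      have h3 : brC cs m (a' * (u * b')) := hmin _ hmem
      have h4 : brC cs m (cs.wordProd l * (k * cs.wordProd r)) := h3.trans hbr2
      rw [hl, hr] at h4
      exact bruhatLE_of_brC cs (by simpa [mul_assoc] using h4)
  · intro w
    obtain ⟨m, hmD, hmin⟩ := exists_brC_min cs W₁ W₂ X₁ X₂ hW₁ hW₂ w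
    exact ⟨m, hmD, fun x hx => bruhatLE_of_brC cs (hmin x hx)⟩
end
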